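/- arXiv:1810.02437 — 2 statements merged into one kernel-verified Lean document; each statement's English description precedes it below -/
import Mathlib

section
/- Let G = G_π be a permutation graph with sink s and T a spanning tree of G. With the edge order ≺_T from Algorithm 3.1, an edge (i,j) of G \ T with h(i) ≤ h(j) is externally active if and only if h(i) = h(j), or h(i) = h(j) − 1 and i < p(j). Consequently, the external activity ext(T) equals level(φ_TC(T)). -/
open Finset
open scoped Classical

def permGraph {n : ℕ} (π : Equiv.Perm (Fin n)) : SimpleGraph (Fin n) :=
  SimpleGraph.fromRel (fun i j => i < j ∧ π.symm j < π.symm i)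

/-- `a` is visited strictly before `b` in the breadth-first search of Algorithm 3.1
on the tree `T` rooted at `s`: vertices are visited by increasing height, and within
a height by decreasing label. -/
def visitBefore {n : ℕ} (T : SimpleGraph (Fin n)) (s a b : Fin n) : Prop :=
  T.dist s a < T.dist s b ∨ (T.dist s a = T.dist s b ∧ b < a)

/-- The total order `≺_T` on edges produced by Algorithm 3.1: an edge is written
`{a, b}` with `a` its first-visited endpoint; edges are ordered by the visit order of
their first-visited endpoint, and for a common first endpoint `a`, the edge with the
larger second endpoint is smaller. -/
def edgeLT {n : ℕ} (T : SimpleGraph (Fin n)) (s : Fin n)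
    (e f : Sym2 (Fin n)) : Prop :=
  ∃ a b c d : Fin n, e = Sym2.mk a b ∧ f = Sym2.mk c d ∧
    visitBefore T s a b ∧ visitBefore T s c d ∧
    (visitBefore T s a c ∨ (a = c ∧ d < b))

/-- An edge `e` of `G` not in the spanning tree `T` is externally active for the edge
order `O` if it is the maximal edge of the unique cycle of `T ∪ {e}`, i.e. every edge
on the `T`-path between the endpoints of `e` is smaller than `e`. -/
def ExtActive {n : ℕ} (G T : SimpleGraph (Fin n))
    (O : Sym2 (Fin n) → Sym2 (Fin n) → Prop) (e : Sym2 (Fin n)) : Prop :=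
  e ∈ G.edgeSet ∧ e ∉ T.edgeSet ∧
    ∀ a b : Fin n, e = Sym2.mk a b →
      ∀ p : T.Walk a b, p.IsPath → ∀ f ∈ p.edges, O f e

noncomputable def lamStat {n : ℕ} (G T : SimpleGraph (Fin n)) (s i : Fin n) : ℕ :=
  (Finset.univ.filter fun j => G.Adj i j ∧ T.dist s i < T.dist s j).card

noncomputable def muStat {n : ℕ} (G T : SimpleGraph (Fin n)) (s i : Fin n) : ℕ :=
  (Finset.univ.filter fun j => G.Adj i j ∧ T.dist s j = T.dist s i).card

noncomputable def nuStat {n : ℕ} (G T : SimpleGraph (Fin n)) (s i : Fin n) : ℕ :=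
  (Finset.univ.filter fun j => G.Adj i j ∧ T.dist s j + 1 = T.dist s i ∧
    ∃ q : Fin n, T.Adj i q ∧ T.dist s q + 1 = T.dist s i ∧ j < q).card

/-- The configuration `c(T) = φ_TC(T)` associated with a spanning tree `T`. -/
noncomputable def treeConfig {n : ℕ} (G T : SimpleGraph (Fin n)) (s : Fin n) :
    Fin n → ℕ :=
  fun i => lamStat G T s i + muStat G T s i + nuStat G T s i

noncomputable def level {n : ℕ} (G : SimpleGraph (Fin n)) (c : Fin n → ℕ) : ℤ :=
  (∑ i, (c i : ℤ)) - (G.edgeFinset.card : ℤ)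


section AuxLemmas

open SimpleGraph Walk

variable {n : ℕ} {T : SimpleGraph (Fin n)} {s : Fin n}

lemma tree_path_length (ht : T.IsTree) {x : Fin n} (p : T.Walk s x) (hp : p.IsPath) :
    p.length = T.dist s x := by
  obtain ⟨q, hq, hql⟩ := (ht.isConnected.preconnected s x).exists_path_of_dist
  have h2 : (⟨p, hp⟩ : T.Path s x) = ⟨q, hq⟩ := ht.IsAcyclic.path_unique _ _
  rw [show p = q from congrArg Subtype.val h2, hql]

lemma dist_le_of_mem_support (ht : T.IsTree) {x y : Fin n} (p : T.Walk s x)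
    (hp : p.IsPath) (hy : y ∈ p.support) : T.dist s y ≤ p.length := by
  have h1 : (p.takeUntil y hy).IsPath := hp.takeUntil hy
  have h2 := tree_path_length ht _ h1
  have h3 := p.length_takeUntil_le hy
  omega

lemma isPath_concat {x y : Fin n} {p : T.Walk s x} (hp : p.IsPath) (h : T.Adj x y)
    (hy : y ∉ p.support) : (p.concat h).IsPath := by
  rw [← Walk.isPath_reverse_iff, Walk.reverse_concat]
  exact hp.reverse.cons (by simpa [Walk.support_reverse] using hy)

lemma adj_dist (ht : T.IsTree) {u v : Fin n} (huv : T.Adj u v) :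
    T.dist s u + 1 = T.dist s v ∨ T.dist s v + 1 = T.dist s u := by
  obtain ⟨p, hp, hpl⟩ := (ht.isConnected.preconnected s u).exists_path_of_dist
  by_cases hv : v ∈ p.support
  · right
    have hdp : (p.dropUntil v hv).IsPath := hp.dropUntil hv
    have hrev : (p.dropUntil v hv).reverse.IsPath := hdp.reverse
    have hsingle : (Walk.cons huv Walk.nil : T.Walk u v).IsPath := by
      simp [Walk.cons_isPath_iff, huv.ne]
    have hequ : ((⟨(p.dropUntil v hv).reverse, hrev⟩ : T.Path u v) : T.Walk u v)
        = (⟨Walk.cons huv Walk.nil, hsingle⟩ : T.Path u v) :=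
      congrArg Subtype.val (ht.IsAcyclic.path_unique _ _)
    have hlen : (p.dropUntil v hv).length = 1 := by
      have := congrArg Walk.length hequ
      simpa using this
    have h2 := congrArg Walk.length (p.take_spec hv)
    rw [Walk.length_append] at h2
    have h3 : (p.takeUntil v hv).length = T.dist s v :=
      tree_path_length ht _ (hp.takeUntil hv)
    omega
  · left
    have hcp : (p.concat huv).IsPath := isPath_concat hp huv hv
    have := tree_path_length ht _ hcp
    rw [Walk.length_concat] at this
    omega

lemma tree_adj_ne_dist (ht : T.IsTree) {u v : Fin n} (huv : T.Adj u v) :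
    T.dist s u ≠ T.dist s v := by
  rcases adj_dist (s := s) ht huv with h | h <;> omega

lemma parent_unique (ht : T.IsTree) {j q1 q2 : Fin n}
    (h1 : T.Adj j q1) (hd1 : T.dist s q1 + 1 = T.dist s j)
    (h2 : T.Adj j q2) (hd2 : T.dist s q2 + 1 = T.dist s j) : q1 = q2 := by
  obtain ⟨p1, hp1, hl1⟩ := (ht.isConnected.preconnected s q1).exists_path_of_dist
  obtain ⟨p2, hp2, hl2⟩ := (ht.isConnected.preconnected s q2).exists_path_of_dist
  have hj1 : j ∉ p1.support := fun hj => by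
    have := dist_le_of_mem_support ht p1 hp1 hj; omega
  have hj2 : j ∉ p2.support := fun hj => by
    have := dist_le_of_mem_support ht p2 hp2 hj; omega
  have hw1 : (p1.concat h1.symm).IsPath := isPath_concat hp1 h1.symm hj1
  have hw2 : (p2.concat h2.symm).IsPath := isPath_concat hp2 h2.symm hj2
  have heq : p1.concat h1.symm = p2.concat h2.symm :=
    congrArg Subtype.val
      (ht.IsAcyclic.path_unique (⟨_, hw1⟩ : T.Path s j) (⟨_, hw2⟩ : T.Path s j))
  have hrev : (Walk.cons h1.symm.symm p1.reverse : T.Walk j s)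
      = Walk.cons h2.symm.symm p2.reverse := by
    rw [← Walk.reverse_concat (h := h1.symm), ← Walk.reverse_concat (h := h2.symm), heq]
  have := congrArg (fun w : T.Walk j s => w.getVert 1) hrev
  simpa [Walk.getVert_cons_succ, Walk.getVert_zero] using this

lemma path_getVert_inj {u v : Fin n} (p : T.Walk u v) :
    p.IsPath → ∀ k l, k ≤ p.length → l ≤ p.length →
      p.getVert k = p.getVert l → k = l := by
  induction p with
  | nil => intro _ k l hk hl _; simp [Walk.length_nil] at hk hl; omega
  | cons h q ih =>
    intro hp k l hk hl he
    rw [Walk.cons_isPath_iff] at hp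
    rw [Walk.length_cons] at hk hl
    rcases k with _ | k <;> rcases l with _ | l
    · rfl
    · exfalso
      rw [Walk.getVert_zero, Walk.getVert_cons_succ] at he
      exact hp.2 (Walk.mem_support_iff_exists_getVert.2 ⟨l, he.symm, by omega⟩)
    · exfalso
      rw [Walk.getVert_zero, Walk.getVert_cons_succ] at he
      exact hp.2 (Walk.mem_support_iff_exists_getVert.2 ⟨k, he, by omega⟩)
    · rw [Walk.getVert_cons_succ, Walk.getVert_cons_succ] at he
      have := ih hp.1 k l (by omega) (by omega) he
      omega

lemma edges_eq_getVert {u v : Fin n} (p : T.Walk u v) :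
    ∀ f ∈ p.edges, ∃ k, k < p.length ∧
      f = Sym2.mk (p.getVert k) (p.getVert (k + 1)) := by
  induction p with
  | nil => simp
  | cons h q ih =>
    intro f hf
    rw [Walk.edges_cons, List.mem_cons] at hf
    rcases hf with rfl | hf
    · exact ⟨0, by simp [Walk.length_cons],
        by simp [Walk.getVert_zero, Walk.getVert_cons_succ]⟩
    · obtain ⟨k, hk, hfk⟩ := ih f hf
      exact ⟨k + 1, by rw [Walk.length_cons]; omega,
        by simpa [Walk.getVert_cons_succ] using hfk⟩

lemma getVert_mem_edges {u v : Fin n} (p : T.Walk u v) :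
    ∀ k, k < p.length → Sym2.mk (p.getVert k) (p.getVert (k + 1)) ∈ p.edges := by
  induction p with
  | nil => simp
  | cons h q ih =>
    intro k hk
    rcases k with _ | k
    · simp [Walk.edges_cons, Walk.getVert_zero, Walk.getVert_cons_succ]
    · rw [Walk.edges_cons]
      simp only [Walk.getVert_cons_succ]
      refine List.mem_cons_of_mem _ (ih k ?_)
      rw [Walk.length_cons] at hk; omega

lemma height_le_max (ht : T.IsTree) {i j : Fin n} (p : T.Walk i j) (hp : p.IsPath) :
    ∀ k ≤ p.length, T.dist s (p.getVert k) ≤ max (T.dist s i) (T.dist s j) := by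
  obtain ⟨k0, hk0mem, hk0max⟩ := Finset.exists_max_image (Finset.range (p.length + 1))
    (fun k => T.dist s (p.getVert k)) ⟨0, by simp⟩
  rw [Finset.mem_range] at hk0mem
  have hmax : ∀ k ≤ p.length, T.dist s (p.getVert k) ≤ T.dist s (p.getVert k0) := by
    intro k hk
    exact hk0max k (Finset.mem_range.2 (by omega))
  have hend : k0 = 0 ∨ k0 = p.length := by
    by_contra hcon
    push_neg at hcon
    have h1 : k0 - 1 < p.length := by omega
    have h2 : k0 < p.length := by omega
    have ha : T.Adj (p.getVert (k0 - 1)) (p.getVert k0) := by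
      have := p.adj_getVert_succ h1
      rwa [show k0 - 1 + 1 = k0 by omega] at this
    have hc : T.Adj (p.getVert k0) (p.getVert (k0 + 1)) := p.adj_getVert_succ h2
    have hane : p.getVert (k0 - 1) ≠ p.getVert (k0 + 1) := by
      intro hcontra
      have := path_getVert_inj p hp (k0 - 1) (k0 + 1) (by omega) (by omega) hcontra
      omega
    have hda : T.dist s (p.getVert (k0 - 1)) + 1 = T.dist s (p.getVert k0) := by
      rcases adj_dist (s := s) ht ha with hd | hd
      · exact hd
      · have := hmax (k0 - 1) (by omega); omega
    have hdc : T.dist s (p.getVert (k0 + 1)) + 1 = T.dist s (p.getVert k0) := by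
      rcases adj_dist (s := s) ht hc with hd | hd
      · have := hmax (k0 + 1) (by omega); omega
      · exact hd
    exact hane (parent_unique ht ha.symm hda hc hdc)
  intro k hk
  have := hmax k hk
  rcases hend with rfl | rfl
  · rw [Walk.getVert_zero] at this
    exact le_trans this (le_max_left _ _)
  · rw [Walk.getVert_length] at this
    exact le_trans this (le_max_right _ _)

lemma height_lt_of_lt (ht : T.IsTree) {i j : Fin n} (p : T.Walk i j) (hp : p.IsPath)
    (hij : T.dist s i < T.dist s j) :
    ∀ k < p.length, T.dist s (p.getVert k) < T.dist s j := by
  intro k hk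
  have hle := height_le_max (s := s) ht p hp k (le_of_lt hk)
  rw [max_eq_right hij.le] at hle
  rcases lt_or_eq_of_le hle with h | h
  · exact h
  exfalso
  have hk0 : k ≠ 0 := by
    intro hk0; rw [hk0, Walk.getVert_zero] at h; omega
  have h1 : k - 1 < p.length := by omega
  have ha : T.Adj (p.getVert (k - 1)) (p.getVert k) := by
    have := p.adj_getVert_succ h1
    rwa [show k - 1 + 1 = k by omega] at this
  have hc : T.Adj (p.getVert k) (p.getVert (k + 1)) := p.adj_getVert_succ hk
  have hane : p.getVert (k - 1) ≠ p.getVert (k + 1) := by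
    intro hcontra
    have := path_getVert_inj p hp (k - 1) (k + 1) (by omega) (by omega) hcontra
    omega
  have hba : T.dist s (p.getVert (k - 1)) ≤ T.dist s j := by
    have := height_le_max (s := s) ht p hp (k - 1) (by omega)
    rwa [max_eq_right hij.le] at this
  have hbc : T.dist s (p.getVert (k + 1)) ≤ T.dist s j := by
    have := height_le_max (s := s) ht p hp (k + 1) (by omega)
    rwa [max_eq_right hij.le] at this
  have hda : T.dist s (p.getVert (k - 1)) + 1 = T.dist s (p.getVert k) := by
    rcases adj_dist (s := s) ht ha with hd | hd
    · exact hd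
    · omega
  have hdc : T.dist s (p.getVert (k + 1)) + 1 = T.dist s (p.getVert k) := by
    rcases adj_dist (s := s) ht hc with hd | hd
    · omega
    · exact hd
  exact hane (parent_unique ht ha.symm hda hc hdc)

end AuxLemmas
section Part1

open SimpleGraph Walk

variable {n : ℕ} {T : SimpleGraph (Fin n)} {s : Fin n}

lemma not_visitBefore {a b : Fin n} (h : T.dist s a < T.dist s b) :
    ¬ visitBefore T s b a := by
  rintro (hlt | ⟨heq, _⟩) <;> omega

lemma part1_key (ht : T.IsTree) {i j : Fin n} (hij : i ≠ j)
    (hcond : T.dist s i = T.dist s j ∨ (T.dist s i + 1 = T.dist s j ∧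
      ∃ q : Fin n, T.Adj j q ∧ T.dist s q + 1 = T.dist s j ∧ i < q))
    (p : T.Walk i j) (hp : p.IsPath) :
    ∀ f ∈ p.edges, edgeLT T s f (Sym2.mk i j) := by
  intro f hf
  obtain ⟨k, hk, hfk⟩ := edges_eq_getVert p f hf
  have hadjk : T.Adj (p.getVert k) (p.getVert (k + 1)) := p.adj_getVert_succ hk
  -- normalize the orientation of the path edge
  have hmain : ∃ u v : Fin n, f = Sym2.mk u v ∧ T.Adj u v ∧
      T.dist s u + 1 = T.dist s v ∧
      T.dist s v ≤ max (T.dist s i) (T.dist s j) ∧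
      (T.dist s i < T.dist s j → (v = j ∨ T.dist s v < T.dist s j)) := by
    rcases adj_dist (s := s) ht hadjk with hc | hc
    · refine ⟨p.getVert k, p.getVert (k + 1), hfk, hadjk, hc,
        height_le_max (s := s) ht p hp (k + 1) (by omega), ?_⟩
      intro hlt
      by_cases hkend : k + 1 = p.length
      · left; rw [hkend, Walk.getVert_length]
      · right; exact height_lt_of_lt ht p hp hlt (k + 1) (by omega)
    · refine ⟨p.getVert (k + 1), p.getVert k, by rw [hfk, Sym2.eq_swap],
        hadjk.symm, hc, height_le_max (s := s) ht p hp k (by omega), ?_⟩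
      intro hlt
      right; exact height_lt_of_lt ht p hp hlt k hk
  obtain ⟨u, v, hfuv, huv, h1, hvmax, hvj⟩ := hmain
  rcases hcond with heq | ⟨hij1, q, hqadj, hqpar, hiq⟩
  · -- equal heights
    have hum : T.dist s u < T.dist s i := by
      rw [← heq, max_self] at hvmax; omega
    rcases lt_trichotomy i j with hlt | heqij | hgt
    · exact ⟨u, v, j, i, hfuv, Sym2.eq_swap.symm ▸ rfl,
        Or.inl (by omega), Or.inr ⟨heq.symm, hlt⟩, Or.inl (Or.inl (by omega))⟩
    · exact absurd heqij hij
    · exact ⟨u, v, i, j, hfuv, rfl, Or.inl (by omega),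
        Or.inr ⟨heq, hgt⟩, Or.inl (Or.inl hum)⟩
  · -- one step
    have hlt : T.dist s i < T.dist s j := by omega
    rcases hvj hlt with rfl | hv
    · -- the edge at the top: u is the parent of j
      have huq : u = q := parent_unique ht huv.symm (by omega) hqadj hqpar
      refine ⟨u, v, i, v, hfuv, rfl, Or.inl (by omega), Or.inl hlt, Or.inl ?_⟩
      exact Or.inr ⟨by omega, huq ▸ hiq⟩
    · exact ⟨u, v, i, j, hfuv, rfl, Or.inl (by omega), Or.inl hlt,
        Or.inl (Or.inl (by omega))⟩

lemma part1 (G : SimpleGraph (Fin n)) (ht : T.IsTree) {i j : Fin n}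
    (hadj : G.Adj i j) (hnT : Sym2.mk i j ∉ T.edgeSet)
    (hle : T.dist s i ≤ T.dist s j) :
    ExtActive G T (edgeLT T s) (Sym2.mk i j) ↔
      (T.dist s i = T.dist s j ∨ (T.dist s i + 1 = T.dist s j ∧
        ∃ q : Fin n, T.Adj j q ∧ T.dist s q + 1 = T.dist s j ∧ i < q)) := by
  constructor
  · intro hact
    by_contra hcon
    push_neg at hcon
    obtain ⟨hne, himp⟩ := hcon
    have hlt : T.dist s i < T.dist s j := lt_of_le_of_ne hle hne
    obtain ⟨p, hp, hpl⟩ := (ht.isConnected.preconnected i j).exists_path_of_dist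
    have hlen : 0 < p.length := by
      rcases Nat.eq_zero_or_pos p.length with h0 | h
      · exact absurd (Walk.eq_of_length_eq_zero h0) hadj.ne
      · exact h
    set k := p.length - 1 with hkdef
    have hkk : k + 1 = p.length := by omega
    have hu := p.getVert_length
    have hfmem : Sym2.mk (p.getVert k) (p.getVert (k + 1)) ∈ p.edges :=
      getVert_mem_edges p k (by omega)
    rw [hkk, hu] at hfmem
    set u := p.getVert k with hudef
    have huj : T.Adj u j := by
      have := p.adj_getVert_succ (show k < p.length by omega)
      rwa [hkk, hu] at this
    have hujlt : T.dist s u < T.dist s j := height_lt_of_lt ht p hp hlt k (by omega)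
    have hu1 : T.dist s u + 1 = T.dist s j := by
      rcases adj_dist (s := s) ht huj with hc | hc
      · exact hc
      · omega
    have hedge := hact.2.2 i j rfl p hp _ hfmem
    obtain ⟨a, b, c, d, hab, hcd, hvab, hvcd, hfin⟩ := hedge
    rw [Sym2.eq_iff] at hab hcd
    have hab' : a = u ∧ b = j := by
      rcases hab with ⟨ha, hb⟩ | ⟨ha, hb⟩
      · exact ⟨ha.symm, hb.symm⟩
      · exfalso; subst ha; subst hb
        exact not_visitBefore hujlt hvab
    have hcd' : c = i ∧ d = j := by
      rcases hcd with ⟨hc, hd⟩ | ⟨hc, hd⟩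
      · exact ⟨hc.symm, hd.symm⟩
      · exfalso; subst hc; subst hd
        exact not_visitBefore hlt hvcd
    obtain ⟨rfl, rfl⟩ := hab'
    obtain ⟨rfl, rfl⟩ := hcd'
    rcases hfin with hvb | ⟨hac, hdb⟩
    · rcases hvb with hlt2 | ⟨heq2, hlt2⟩
      · omega
      · -- u at the same height as i and i < u : u is a parent witness
        exact absurd hlt2 (by simpa using himp (by omega) u huj.symm hu1)
    · exact absurd hdb (lt_irrefl _)
  · intro hcond
    refine ⟨(G.mem_edgeSet).mpr hadj, hnT, ?_⟩
    intro a b hab p hp f hf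
    rw [Sym2.eq_iff] at hab
    rcases hab with ⟨ha, hb⟩ | ⟨ha, hb⟩
    · subst ha; subst hb
      exact part1_key ht hadj.ne hcond p hp f hf
    · subst ha; subst hb
      refine part1_key ht hadj.ne hcond p.reverse hp.reverse f ?_
      rw [Walk.edges_reverse, List.mem_reverse]
      exact hf

end Part1
section Part2

open SimpleGraph Walk

variable {n : ℕ}

def Req (T : SimpleGraph (Fin n)) (s : Fin n) (e : Sym2 (Fin n)) : Prop :=
  ∃ i j : Fin n, e = Sym2.mk i j ∧ T.dist s i = T.dist s j

def Rnu (T : SimpleGraph (Fin n)) (s : Fin n) (e : Sym2 (Fin n)) : Prop :=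
  ∃ i j : Fin n, e = Sym2.mk i j ∧ T.dist s i + 1 = T.dist s j ∧
    ∃ q : Fin n, T.Adj j q ∧ T.dist s q + 1 = T.dist s j ∧ i < q

def Rlt (T : SimpleGraph (Fin n)) (s : Fin n) (e : Sym2 (Fin n)) : Prop :=
  ∃ i j : Fin n, e = Sym2.mk i j ∧ T.dist s i < T.dist s j

variable {T : SimpleGraph (Fin n)} {s : Fin n}

lemma step1_aux (G : SimpleGraph (Fin n)) (ht : T.IsTree) {u v : Fin n}
    (hadj : G.Adj u v) (hle : T.dist s u ≤ T.dist s v) :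
    ExtActive G T (edgeLT T s) (Sym2.mk u v) ↔
      (Req T s (Sym2.mk u v) ∨ Rnu T s (Sym2.mk u v)) := by
  by_cases hT : Sym2.mk u v ∈ T.edgeSet
  · have hTadj : T.Adj u v := (T.mem_edgeSet).mp hT
    constructor
    · intro h; exact absurd hT h.2.1
    · rintro (⟨i, j, hij, heq⟩ | ⟨i, j, hij, h1, q, hq1, hq2, hq3⟩)
      · exfalso
        rw [Sym2.eq_iff] at hij
        rcases hij with ⟨h1, h2⟩ | ⟨h1, h2⟩ <;> subst h1 <;> subst h2
        · exact tree_adj_ne_dist (s := s) ht hTadj heq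
        · exact tree_adj_ne_dist (s := s) ht hTadj heq.symm
      · exfalso
        rw [Sym2.eq_iff] at hij
        rcases hij with ⟨ha, hb⟩ | ⟨ha, hb⟩ <;> subst ha <;> subst hb
        · exact absurd hq3 (by simp [parent_unique ht hTadj.symm h1 hq1 hq2])
        · omega
  · rw [part1 G ht hadj hT hle]
    constructor
    · rintro (heq | ⟨h1, q, hq⟩)
      · exact Or.inl ⟨u, v, rfl, heq⟩
      · exact Or.inr ⟨u, v, rfl, h1, q, hq⟩
    · rintro (⟨i, j, hij, heq⟩ | ⟨i, j, hij, h1, q, hq1, hq2, hq3⟩)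
      · rw [Sym2.eq_iff] at hij
        rcases hij with ⟨ha, hb⟩ | ⟨ha, hb⟩ <;> subst ha <;> subst hb
        · exact Or.inl heq
        · exact Or.inl heq.symm
      · rw [Sym2.eq_iff] at hij
        rcases hij with ⟨ha, hb⟩ | ⟨ha, hb⟩ <;> subst ha <;> subst hb
        · exact Or.inr ⟨h1, q, hq1, hq2, hq3⟩
        · omega

lemma step1 (G : SimpleGraph (Fin n)) (ht : T.IsTree) (e : Sym2 (Fin n))
    (he : e ∈ G.edgeSet) :
    ExtActive G T (edgeLT T s) e ↔ (Req T s e ∨ Rnu T s e) := by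
  induction e using Sym2.ind with
  | _ u v =>
    have hadj : G.Adj u v := (G.mem_edgeSet).mp he
    rcases le_total (T.dist s u) (T.dist s v) with hle | hle
    · exact step1_aux G ht hadj hle
    · rw [show (Sym2.mk u v : Sym2 (Fin n)) = Sym2.mk v u from Sym2.eq_swap]
      exact step1_aux G ht hadj.symm hle

lemma pairSum (P : Fin n → Fin n → Prop) [∀ i, DecidablePred (P i)]
    [DecidablePred fun p : Fin n × Fin n => P p.1 p.2] :
    ∑ i, (Finset.univ.filter fun j => P i j).card
      = (Finset.univ.filter fun p : Fin n × Fin n => P p.1 p.2).card := by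
  have h2 : (Finset.univ.filter fun p : Fin n × Fin n => P p.1 p.2).card
      = ∑ i : Fin n, ∑ j : Fin n, if P i j then 1 else 0 := by
    rw [Finset.card_filter, ← Finset.univ_product_univ, Finset.sum_product]
    exact Finset.sum_congr rfl fun i _ => Finset.sum_congr rfl fun j _ =>
      if_congr Iff.rfl rfl rfl
  rw [h2]
  exact Finset.sum_congr rfl fun i _ => Finset.card_filter _ _

lemma count_lt (G : SimpleGraph (Fin n)) :
    (Finset.univ.filter fun p : Fin n × Fin n =>
        G.Adj p.1 p.2 ∧ T.dist s p.1 < T.dist s p.2).card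
      = (G.edgeFinset.filter (Rlt T s)).card := by
  apply Finset.card_bij (fun p _ => Sym2.mk p.1 p.2)
  · rintro ⟨a, b⟩ hp
    simp only [Finset.mem_filter, Finset.mem_univ, true_and] at hp
    simp only [Finset.mem_filter, SimpleGraph.mem_edgeFinset]
    exact ⟨(G.mem_edgeSet).mpr hp.1, a, b, rfl, hp.2⟩
  · rintro ⟨a, b⟩ hp ⟨c, d⟩ hp' hpe
    simp only [Finset.mem_filter, Finset.mem_univ, true_and] at hp hp'
    simp only [Sym2.eq_iff] at hpe
    rcases hpe with ⟨ha, hb⟩ | ⟨ha, hb⟩ <;> subst ha <;> subst hb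
    · rfl
    · exfalso; omega
  · intro e he
    simp only [Finset.mem_filter, SimpleGraph.mem_edgeFinset] at he
    obtain ⟨hemem, i, j, rfl, hlt⟩ := he
    refine ⟨(i, j), ?_, rfl⟩
    simp only [Finset.mem_filter, Finset.mem_univ, true_and]
    exact ⟨(G.mem_edgeSet).mp hemem, hlt⟩

lemma count_nu (G : SimpleGraph (Fin n)) :
    (Finset.univ.filter fun p : Fin n × Fin n =>
        G.Adj p.1 p.2 ∧ T.dist s p.2 + 1 = T.dist s p.1 ∧
        ∃ q : Fin n, T.Adj p.1 q ∧ T.dist s q + 1 = T.dist s p.1 ∧ p.2 < q).card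
      = (G.edgeFinset.filter (Rnu T s)).card := by
  apply Finset.card_bij (fun p _ => Sym2.mk p.1 p.2)
  · rintro ⟨a, b⟩ hp
    simp only [Finset.mem_filter, Finset.mem_univ, true_and] at hp
    simp only [Finset.mem_filter, SimpleGraph.mem_edgeFinset]
    exact ⟨(G.mem_edgeSet).mpr hp.1,
      b, a, Sym2.eq_swap, hp.2.1, hp.2.2⟩
  · rintro ⟨a, b⟩ hp ⟨c, d⟩ hp' hpe
    simp only [Finset.mem_filter, Finset.mem_univ, true_and] at hp hp'
    simp only [Sym2.eq_iff] at hpe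
    rcases hpe with ⟨ha, hb⟩ | ⟨ha, hb⟩ <;> subst ha <;> subst hb
    · rfl
    · exfalso; omega
  · intro e he
    simp only [Finset.mem_filter, SimpleGraph.mem_edgeFinset] at he
    obtain ⟨hemem, i, j, rfl, h1, q, hq1, hq2, hq3⟩ := he
    refine ⟨(j, i), ?_, Sym2.eq_swap⟩
    simp only [Finset.mem_filter, Finset.mem_univ, true_and]
    exact ⟨((G.mem_edgeSet).mp hemem).symm, h1, q, hq1, hq2, hq3⟩

lemma count_eq_lo (G : SimpleGraph (Fin n)) :
    ((Finset.univ.filter fun p : Fin n × Fin n =>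
        G.Adj p.1 p.2 ∧ T.dist s p.2 = T.dist s p.1).filter
      (fun p => p.1 < p.2)).card
      = (G.edgeFinset.filter (Req T s)).card := by
  apply Finset.card_bij (fun p _ => Sym2.mk p.1 p.2)
  · rintro ⟨a, b⟩ hp
    simp only [Finset.mem_filter, Finset.mem_univ, true_and] at hp
    simp only [Finset.mem_filter, SimpleGraph.mem_edgeFinset]
    exact ⟨(G.mem_edgeSet).mpr hp.1.1, a, b, rfl, hp.1.2.symm⟩
  · rintro ⟨a, b⟩ hp ⟨c, d⟩ hp' hpe
    simp only [Finset.mem_filter, Finset.mem_univ, true_and] at hp hp'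
    simp only [Sym2.eq_iff] at hpe
    rcases hpe with ⟨ha, hb⟩ | ⟨ha, hb⟩ <;> subst ha <;> subst hb
    · rfl
    · exfalso
      have h1 := hp.2
      have h2 := hp'.2
      omega
  · intro e he
    simp only [Finset.mem_filter, SimpleGraph.mem_edgeFinset] at he
    obtain ⟨hemem, i, j, rfl, heq⟩ := he
    have hadj : G.Adj i j := (G.mem_edgeSet).mp hemem
    rcases lt_trichotomy i j with hlt | heqij | hgt
    · refine ⟨(i, j), ?_, rfl⟩
      simp only [Finset.mem_filter, Finset.mem_univ, true_and]
      exact ⟨⟨hadj, heq.symm⟩, hlt⟩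
    · exact absurd heqij hadj.ne
    · refine ⟨(j, i), ?_, Sym2.eq_swap⟩
      simp only [Finset.mem_filter, Finset.mem_univ, true_and]
      exact ⟨⟨hadj.symm, heq⟩, hgt⟩

lemma count_eq_hi (G : SimpleGraph (Fin n)) :
    ((Finset.univ.filter fun p : Fin n × Fin n =>
        G.Adj p.1 p.2 ∧ T.dist s p.2 = T.dist s p.1).filter
      (fun p => ¬ p.1 < p.2)).card
      = (G.edgeFinset.filter (Req T s)).card := by
  apply Finset.card_bij (fun p _ => Sym2.mk p.1 p.2)
  · rintro ⟨a, b⟩ hp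
    simp only [Finset.mem_filter, Finset.mem_univ, true_and] at hp
    simp only [Finset.mem_filter, SimpleGraph.mem_edgeFinset]
    exact ⟨(G.mem_edgeSet).mpr hp.1.1, a, b, rfl, hp.1.2.symm⟩
  · rintro ⟨a, b⟩ hp ⟨c, d⟩ hp' hpe
    simp only [Finset.mem_filter, Finset.mem_univ, true_and] at hp hp'
    simp only [Sym2.eq_iff] at hpe
    rcases hpe with ⟨ha, hb⟩ | ⟨ha, hb⟩ <;> subst ha <;> subst hb
    · rfl
    · exfalso
      have hne : a ≠ b := hp.1.1.ne
      have hne' : b ≠ a := hp'.1.1.ne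
      have h1 := hp.2
      have h2 := hp'.2
      rcases lt_trichotomy a b with h | h | h <;> simp_all
  · intro e he
    simp only [Finset.mem_filter, SimpleGraph.mem_edgeFinset] at he
    obtain ⟨hemem, i, j, rfl, heq⟩ := he
    have hadj : G.Adj i j := (G.mem_edgeSet).mp hemem
    rcases lt_trichotomy i j with hlt | heqij | hgt
    · refine ⟨(j, i), ?_, Sym2.eq_swap⟩
      simp only [Finset.mem_filter, Finset.mem_univ, true_and]
      exact ⟨⟨hadj.symm, heq⟩, by omega⟩
    · exact absurd heqij hadj.ne
    · refine ⟨(i, j), ?_, rfl⟩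
      simp only [Finset.mem_filter, Finset.mem_univ, true_and]
      exact ⟨⟨hadj, heq.symm⟩, by omega⟩

lemma count_eq (G : SimpleGraph (Fin n)) :
    (Finset.univ.filter fun p : Fin n × Fin n =>
        G.Adj p.1 p.2 ∧ T.dist s p.2 = T.dist s p.1).card
      = 2 * (G.edgeFinset.filter (Req T s)).card := by
  rw [← Finset.card_filter_add_card_filter_not
    (p := fun p : Fin n × Fin n => p.1 < p.2)
    (s := Finset.univ.filter fun p : Fin n × Fin n =>
      G.Adj p.1 p.2 ∧ T.dist s p.2 = T.dist s p.1)]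
  rw [count_eq_lo, count_eq_hi]
  ring

lemma edge_partition (G : SimpleGraph (Fin n)) (ht : T.IsTree) :
    (G.edgeFinset.filter (Rlt T s)).card + (G.edgeFinset.filter (Req T s)).card
      = G.edgeFinset.card := by
  have hcongr : G.edgeFinset.filter (Req T s)
      = G.edgeFinset.filter (fun e => ¬ Rlt T s e) := by
    apply Finset.filter_congr
    intro e he
    rw [SimpleGraph.mem_edgeFinset] at he
    induction e using Sym2.ind with
    | _ u v =>
      have hadj : G.Adj u v := (G.mem_edgeSet).mp he
      constructor
      · rintro ⟨i, j, hij, heq⟩ ⟨i', j', hij', hlt⟩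
        rw [Sym2.eq_iff] at hij hij'
        rcases hij with ⟨ha, hb⟩ | ⟨ha, hb⟩ <;>
          rcases hij' with ⟨ha', hb'⟩ | ⟨ha', hb'⟩ <;>
          subst ha <;> subst hb <;> subst ha' <;> subst hb' <;> omega
      · intro hnlt
        rcases lt_trichotomy (T.dist s u) (T.dist s v) with h | h | h
        · exact absurd ⟨u, v, rfl, h⟩ hnlt
        · exact ⟨u, v, rfl, h⟩
        · exact absurd ⟨v, u, Sym2.eq_swap, h⟩ hnlt
  rw [hcongr, Finset.card_filter_add_card_filter_not]

lemma active_count (G : SimpleGraph (Fin n)) (ht : T.IsTree) :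
    (G.edgeFinset.filter (fun e => ExtActive G T (edgeLT T s) e)).card
      = (G.edgeFinset.filter (Req T s)).card
        + (G.edgeFinset.filter (Rnu T s)).card := by
  have hcongr : G.edgeFinset.filter (fun e => ExtActive G T (edgeLT T s) e)
      = G.edgeFinset.filter (fun e => Req T s e ∨ Rnu T s e) := by
    apply Finset.filter_congr
    intro e he
    rw [SimpleGraph.mem_edgeFinset] at he
    exact step1 G ht e he
  rw [hcongr, Finset.filter_or]
  apply Finset.card_union_of_disjoint
  rw [Finset.disjoint_left]
  intro e he1 he2
  rw [Finset.mem_filter] at he1 he2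
  obtain ⟨-, i, j, hij, heq⟩ := he1
  obtain ⟨-, i', j', hij', h1, -⟩ := he2
  rw [hij, Sym2.eq_iff] at hij'
  rcases hij' with ⟨ha, hb⟩ | ⟨ha, hb⟩ <;> subst ha <;> subst hb <;> omega

end Part2

/-- for a spanning tree `T` of the permutation graph `G_π` with sink
`s`, an edge `(i, j)` of `G \ T` with `h(i) ≤ h(j)` is externally active for `≺_T` iff
`h(i) = h(j)`, or `h(i) = h(j) - 1` and `i < p(j)`; consequently the external activity
of `T` equals the level of the configuration `φ_TC(T)`. -/
theorem extActive_iff_and_ext_eq_level {n : ℕ} (π : Equiv.Perm (Fin n)) (s : Fin n)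
    (T : SimpleGraph (Fin n)) (hsub : T ≤ permGraph π) (htree : T.IsTree) :
    (∀ i j : Fin n, (permGraph π).Adj i j → Sym2.mk i j ∉ T.edgeSet →
      T.dist s i ≤ T.dist s j →
      (ExtActive (permGraph π) T (edgeLT T s) (Sym2.mk i j) ↔
        (T.dist s i = T.dist s j ∨
          (T.dist s i + 1 = T.dist s j ∧
            ∃ q : Fin n, T.Adj j q ∧ T.dist s q + 1 = T.dist s j ∧ i < q)))) ∧
    (((permGraph π).edgeFinset.filter
        (fun e => ExtActive (permGraph π) T (edgeLT T s) e)).card : ℤ) =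
      level (permGraph π) (treeConfig (permGraph π) T s) := by
  constructor
  · intro i j hadj hnT hle
    exact part1 (permGraph π) htree hadj hnT hle
  · set G := permGraph π with hG
    have hlam : ∑ i, lamStat G T s i
        = (Finset.univ.filter fun p : Fin n × Fin n =>
            G.Adj p.1 p.2 ∧ T.dist s p.1 < T.dist s p.2).card := by
      unfold lamStat; exact pairSum _
    have hmu : ∑ i, muStat G T s i
        = (Finset.univ.filter fun p : Fin n × Fin n =>
            G.Adj p.1 p.2 ∧ T.dist s p.2 = T.dist s p.1).card := by
      unfold muStat; exact pairSum _
    have hnu : ∑ i, nuStat G T s i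
        = (Finset.univ.filter fun p : Fin n × Fin n =>
            G.Adj p.1 p.2 ∧ T.dist s p.2 + 1 = T.dist s p.1 ∧
            ∃ q : Fin n, T.Adj p.1 q ∧ T.dist s q + 1 = T.dist s p.1 ∧ p.2 < q).card := by
      unfold nuStat; exact pairSum _
    have hkey : (G.edgeFinset.filter (fun e => ExtActive G T (edgeLT T s) e)).card
        + G.edgeFinset.card = ∑ i, treeConfig G T s i := by
      have h1 := active_count (s := s) G htree
      have h2 := edge_partition (s := s) G htree
      have h3 := count_lt (T := T) (s := s) G
      have h4 := count_eq (T := T) (s := s) G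
      have h5 := count_nu (T := T) (s := s) G
      have hsplit : ∑ i, treeConfig G T s i
          = ∑ i, lamStat G T s i + ∑ i, muStat G T s i + ∑ i, nuStat G T s i := by
        unfold treeConfig
        rw [Finset.sum_add_distrib, Finset.sum_add_distrib]
      rw [hsplit, hlam, hmu, hnu]
      omega
    unfold level
    rw [← Nat.cast_sum]
    omega
end

section
/- Let M be a complete multirooted non-ambiguous binary tree and ζ(M) the corresponding spanning tree of G_π, with the edges of G_π ordered reverse lexicographically by the coordinates of the corresponding cells in T_π. Then M has a unique root if and only if ζ(M) has no externally active edges. -/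
open Finset
open scoped Classical

/-- The leaf dots of the grid `T_π`: a dot in cell `(π t, t)` for every `t`. -/
def leafDots {n : ℕ} (π : Equiv.Perm (Fin n)) : Finset (Fin n × Fin n) :=
  Finset.univ.image (fun t => (π t, t))

/-- `q` is the nearest dot of `D` above `p` in its column, or the nearest dot of `D`
to the left of `p` in its row. -/
def dotRel {n : ℕ} (D : Finset (Fin n × Fin n)) (p q : Fin n × Fin n) : Prop :=
  p ∈ D ∧ q ∈ D ∧
    ((p.2 = q.2 ∧ q.1 < p.1 ∧ ∀ x ∈ D, x.2 = p.2 → q.1 < x.1 → p.1 ≤ x.1) ∨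
     (p.1 = q.1 ∧ q.2 < p.2 ∧ ∀ x ∈ D, x.1 = p.1 → q.2 < x.2 → p.2 ≤ x.2))

/-- The graph on the dots of `D`: each dot is connected to the nearest dot above it
(in its column) and the nearest dot to its left (in its row), when these exist. -/
def dotGraph {n : ℕ} (D : Finset (Fin n × Fin n)) : SimpleGraph (Fin n × Fin n) :=
  SimpleGraph.fromRel (dotRel D)

/-- `D` is a complete multirooted non-ambiguous binary tree (CMNAB) on `T_π`: it is
obtained from the leaf dots of `T_π` by adding `n - 1` internal dots, each having a
dot below it in its column and a dot to its right in its row, such that the induced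
graph on the dots is a tree. -/
def IsCMNAB {n : ℕ} (π : Equiv.Perm (Fin n)) (D : Finset (Fin n × Fin n)) : Prop :=
  leafDots π ⊆ D ∧
  D.card = 2 * n - 1 ∧
  (∀ p ∈ D, p ∉ leafDots π →
    (∃ q ∈ D, q.2 = p.2 ∧ p.1 < q.1) ∧ (∃ q ∈ D, q.1 = p.1 ∧ p.2 < q.2)) ∧
  (SimpleGraph.induce (↑D : Set (Fin n × Fin n)) (dotGraph D)).IsTree

/-- The map `ζ`: the subgraph of `G_π` whose edges `(a, π j)` correspond to the
internal dots `(a, j)` of `D`. -/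
def zeta {n : ℕ} (π : Equiv.Perm (Fin n)) (D : Finset (Fin n × Fin n)) :
    SimpleGraph (Fin n) :=
  SimpleGraph.fromRel
    (fun a b => ∃ j : Fin n, (a, j) ∈ D ∧ (a, j) ∉ leafDots π ∧ b = π j)

/-- There is a dot of `D` strictly above `p` in its column. -/
def DotAbove {n : ℕ} (D : Finset (Fin n × Fin n)) (p : Fin n × Fin n) : Prop :=
  ∃ q ∈ D, q.2 = p.2 ∧ q.1 < p.1

/-- There is a dot of `D` strictly to the left of `p` in its row. -/
def DotLeft {n : ℕ} (D : Finset (Fin n × Fin n)) (p : Fin n × Fin n) : Prop :=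
  ∃ q ∈ D, q.1 = p.1 ∧ q.2 < p.2

/-- A root of `D` is a dot with no dot above it and no dot to its left. -/
def IsRootDot {n : ℕ} (D : Finset (Fin n × Fin n)) (p : Fin n × Fin n) : Prop :=
  p ∈ D ∧ ¬ DotAbove D p ∧ ¬ DotLeft D p

/-- The fixed order on the edges of `G_π`: each edge `{a, b}` with `a < b` corresponds
to the cell `(a, π⁻¹ b)` of `T_π`, and edges are ordered reverse lexicographically by
the coordinates of their cells (cells to the northwest are larger). -/
def revLexEdgeLT {n : ℕ} (π : Equiv.Perm (Fin n)) (e f : Sym2 (Fin n)) : Prop :=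
  ∃ a b c d : Fin n, e = Sym2.mk a b ∧ f = Sym2.mk c d ∧ a < b ∧ c < d ∧
    (c < a ∨ (c = a ∧ π.symm d < π.symm b))

namespace CMNABAux

open SimpleGraph

set_option linter.unusedSectionVars false
set_option maxHeartbeats 1000000

section Generic
variable {V : Type*} [Fintype V] [DecidableEq V]





lemma ncard_edgeFinset (G : SimpleGraph V) [Fintype G.edgeSet] :
    G.edgeSet.ncard = G.edgeFinset.card :=
  (Set.ncard_eq_toFinset_card' _).trans rfl

lemma reach_del {G : SimpleGraph V} {x y : V}
    (hdet : (G \ fromEdgeSet {s(x, y)}).Reachable x y) :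
    ∀ {u w : V}, G.Reachable u w → (G \ fromEdgeSet {s(x, y)}).Reachable u w := by
  intro u w h
  obtain ⟨W⟩ := h
  induction W with
  | nil => exact Reachable.refl _
  | @cons u z w h p ih =>
    refine Reachable.trans ?_ ih
    by_cases he : s(u, z) = s(x, y)
    · rw [Sym2.eq_iff] at he
      rcases he with ⟨rfl, rfl⟩ | ⟨rfl, rfl⟩
      · exact hdet
      · exact hdet.symm
    · exact Adj.reachable (by simp [sdiff_adj, fromEdgeSet_adj, h, he])

lemma cycle_step {G : SimpleGraph V} (hc : G.Connected)
    {v : V} {c : G.Walk v v} (hcyc : c.IsCycle) :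
    ∃ G' : SimpleGraph V, G'.Connected ∧ G'.edgeSet.ncard + 1 = G.edgeSet.ncard := by
  have hne : c.edges ≠ [] := by
    intro h
    have := hcyc.three_le_length
    have : c.length = 0 := by simpa using congrArg List.length h
    omega
  obtain ⟨e, he⟩ := List.exists_mem_of_ne_nil _ hne
  revert he
  induction e using Sym2.ind with
  | _ x y =>
  intro he
  have hadjdel : G.Adj x y ∧ (G \ fromEdgeSet {s(x, y)}).Reachable x y :=
    (adj_and_reachable_delete_edges_iff_exists_cycle).2 ⟨v, c, hcyc, he⟩
  haveI : Nonempty V := hc.nonempty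
  refine ⟨G \ fromEdgeSet {s(x, y)}, Connected.mk (fun u w => reach_del hadjdel.2 (hc u w)), ?_⟩
  have hes : (G \ fromEdgeSet {s(x, y)}).edgeSet = G.edgeSet \ {s(x, y)} := by
    rw [edgeSet_sdiff, edgeSet_fromEdgeSet]
    ext f
    simp only [Set.mem_diff, Set.mem_singleton_iff, Set.mem_setOf_eq, not_and, not_not]
    constructor
    · rintro ⟨hf, hf2⟩
      refine ⟨hf, fun hfe => ?_⟩
      exact (G.not_isDiag_of_mem_edgeSet hf) (hf2 hfe)
    · rintro ⟨h1, h2⟩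
      exact ⟨h1, fun hh => absurd hh h2⟩
  have hmem : s(x, y) ∈ G.edgeSet := hadjdel.1
  rw [hes, Set.ncard_diff_singleton_of_mem hmem]
  have : 0 < G.edgeSet.ncard := by
    rw [Set.ncard_pos (Set.toFinite _)]
    exact ⟨_, hmem⟩
  omega

lemma conn_card (G : SimpleGraph V) (hc : G.Connected) :
    Fintype.card V ≤ G.edgeSet.ncard + 1 := by
  generalize hk : G.edgeSet.ncard = k
  induction k using Nat.strong_induction_on generalizing G with
  | _ k ih =>
    by_cases hac : G.IsAcyclic
    · have := IsTree.card_edgeFinset ⟨hc, hac⟩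
      rw [← ncard_edgeFinset] at this
      omega
    · simp only [IsAcyclic, not_forall, not_not] at hac
      obtain ⟨v, c, hcyc⟩ := hac
      obtain ⟨G', hG'c, hG'card⟩ := cycle_step hc hcyc
      have h1 : G'.edgeSet.ncard < k := by omega
      have := ih _ h1 G' hG'c rfl
      omega

lemma acyclic_of_card (G : SimpleGraph V) (hc : G.Connected)
    (hcard : Fintype.card V = G.edgeSet.ncard + 1) : G.IsAcyclic := by
  by_contra hac
  simp only [IsAcyclic, not_forall, not_not] at hac
  obtain ⟨v, c, hcyc⟩ := hac
  obtain ⟨G', hG'c, hG'card⟩ := cycle_step hc hcyc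
  have := conn_card G' hG'c
  omega


end Generic

variable {n : ℕ} (π : Equiv.Perm (Fin n)) (D : Finset (Fin n × Fin n))

lemma mem_leafDots {p : Fin n × Fin n} : p ∈ leafDots π ↔ p.1 = π p.2 := by
  simp only [leafDots, Finset.mem_image, Finset.mem_univ, true_and]
  constructor
  · rintro ⟨t, rfl⟩; rfl
  · intro h
    exact ⟨p.2, by rw [← h]⟩

variable {π D}

section Basic

variable (hD : IsCMNAB π D)

include hD

lemma row_le {p : Fin n × Fin n} (hp : p ∈ D) : p.1 ≤ π p.2 := by
  by_contra hlt
  push_neg at hlt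
  set S := D.filter (fun q => q.2 = p.2 ∧ π p.2 < q.1) with hS
  have hpS : p ∈ S := by simp [hS, hp, hlt]
  obtain ⟨q, hqS, hqmax⟩ := S.exists_max_image (fun q => (q.1 : ℕ)) ⟨p, hpS⟩
  simp only [hS, Finset.mem_filter] at hqS
  obtain ⟨hqD, hqcol, hqlt⟩ := hqS
  have hqleaf : q ∉ leafDots π := by
    rw [mem_leafDots]
    intro h
    rw [hqcol] at h
    exact absurd (h ▸ hqlt) (lt_irrefl _)
  obtain ⟨⟨q', hq'D, hq'col, hq'lt⟩, -⟩ := hD.2.2.1 q hqD hqleaf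
  have : q' ∈ S := by
    simp only [hS, Finset.mem_filter]
    exact ⟨hq'D, by rw [hq'col, hqcol], lt_trans hqlt hq'lt⟩
  have := hqmax q' this
  exact absurd hq'lt (by omega)

lemma col_le {p : Fin n × Fin n} (hp : p ∈ D) : p.2 ≤ π.symm p.1 := by
  by_contra hlt
  push_neg at hlt
  set S := D.filter (fun q => q.1 = p.1 ∧ π.symm p.1 < q.2) with hS
  have hpS : p ∈ S := by simp [hS, hp, hlt]
  obtain ⟨q, hqS, hqmax⟩ := S.exists_max_image (fun q => (q.2 : ℕ)) ⟨p, hpS⟩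
  simp only [hS, Finset.mem_filter] at hqS
  obtain ⟨hqD, hqrow, hqlt⟩ := hqS
  have hqleaf : q ∉ leafDots π := by
    rw [mem_leafDots]
    intro h
    have : q.2 = π.symm q.1 := by rw [h, Equiv.symm_apply_apply]
    rw [hqrow] at this
    exact absurd (this ▸ hqlt) (lt_irrefl _)
  obtain ⟨-, ⟨q', hq'D, hq'row, hq'lt⟩⟩ := hD.2.2.1 q hqD hqleaf
  have : q' ∈ S := by
    simp only [hS, Finset.mem_filter]
    exact ⟨hq'D, by rw [hq'row, hqrow], lt_trans hqlt hq'lt⟩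
  have := hqmax q' this
  exact absurd hq'lt (by omega)

lemma internal_row_lt {p : Fin n × Fin n} (hp : p ∈ D) (hl : p ∉ leafDots π) :
    p.1 < π p.2 :=
  lt_of_le_of_ne (row_le hD hp) (fun h => hl ((mem_leafDots π).2 h))

lemma internal_col_lt {p : Fin n × Fin n} (hp : p ∈ D) (hl : p ∉ leafDots π) :
    p.2 < π.symm p.1 := by
  refine lt_of_le_of_ne (col_le hD hp) (fun h => hl ((mem_leafDots π).2 ?_))
  rw [h, Equiv.apply_symm_apply]

end Basic

lemma leafpt_mem (v : Fin n) : (v, π.symm v) ∈ leafDots π :=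
  (mem_leafDots π).2 (by simp)

lemma adj_of_dotRel {p q : Fin n × Fin n} (h : dotRel D p q) : (dotGraph D).Adj p q := by
  rw [dotGraph, fromRel_adj]
  refine ⟨?_, Or.inl h⟩
  rintro rfl
  rcases h.2.2 with ⟨-, h2, -⟩ | ⟨-, h2, -⟩ <;> exact absurd h2 (lt_irrefl _)

lemma dot_adj_mem {p q : Fin n × Fin n} (h : (dotGraph D).Adj p q) : p ∈ D ∧ q ∈ D := by
  rw [dotGraph, fromRel_adj] at h
  rcases h.2 with h' | h'
  · exact ⟨h'.1, h'.2.1⟩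
  · exact ⟨h'.2.1, h'.1⟩

lemma dot_adj_line {p q : Fin n × Fin n} (h : (dotGraph D).Adj p q) :
    p.1 = q.1 ∨ p.2 = q.2 := by
  rw [dotGraph, fromRel_adj] at h
  rcases h.2 with ⟨-, -, h' | h'⟩ | ⟨-, -, h' | h'⟩
  · exact Or.inr h'.1
  · exact Or.inl h'.1
  · exact Or.inr h'.1.symm
  · exact Or.inl h'.1.symm

lemma nearest_left {p q0 : Fin n × Fin n} (hp : p ∈ D) (hq0 : q0 ∈ D)
    (hrow : q0.1 = p.1) (hlt : q0.2 < p.2) :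
    ∃ q ∈ D, q.1 = p.1 ∧ q.2 < p.2 ∧ q0.2 ≤ q.2 ∧ (dotGraph D).Adj p q := by
  set S := D.filter (fun x => x.1 = p.1 ∧ x.2 < p.2) with hS
  have hq0S : q0 ∈ S := by simp [hS, hq0, hrow, hlt]
  obtain ⟨q, hqS, hqmax⟩ := S.exists_max_image (fun x => (x.2 : ℕ)) ⟨q0, hq0S⟩
  simp only [hS, Finset.mem_filter] at hqS
  refine ⟨q, hqS.1, hqS.2.1, hqS.2.2, hqmax q0 hq0S, ?_⟩
  refine adj_of_dotRel ⟨hp, hqS.1, Or.inr ⟨hqS.2.1.symm, hqS.2.2, ?_⟩⟩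
  intro x hx hxrow hxgt
  by_contra hxlt
  push_neg at hxlt
  have : x ∈ S := by simp [hS, hx, hxrow, hxlt]
  have := hqmax x this
  omega

lemma nearest_below {p q0 : Fin n × Fin n} (hp : p ∈ D) (hq0 : q0 ∈ D)
    (hcol : q0.2 = p.2) (hlt : p.1 < q0.1) :
    ∃ q ∈ D, q.2 = p.2 ∧ p.1 < q.1 ∧ q.1 ≤ q0.1 ∧ (dotGraph D).Adj p q := by
  set S := D.filter (fun x => x.2 = p.2 ∧ p.1 < x.1) with hS
  have hq0S : q0 ∈ S := by simp [hS, hq0, hcol, hlt]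
  obtain ⟨q, hqS, hqmin⟩ := S.exists_min_image (fun x => (x.1 : ℕ)) ⟨q0, hq0S⟩
  simp only [hS, Finset.mem_filter] at hqS
  refine ⟨q, hqS.1, hqS.2.1, hqS.2.2, hqmin q0 hq0S, ?_⟩
  have : dotRel D q p := by
    refine ⟨hqS.1, hp, Or.inl ⟨hqS.2.1, hqS.2.2, ?_⟩⟩
    intro x hx hxcol hxgt
    by_contra hxlt
    push_neg at hxlt
    have : x ∈ S := by
      simp only [hS, Finset.mem_filter]
      exact ⟨hx, by rw [hxcol, hqS.2.1], hxgt⟩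
    have := hqmin x this
    omega
  exact (adj_of_dotRel this).symm

lemma rowWalkL {p : Fin n × Fin n} (hp : p ∈ D) :
    ∀ k (q : Fin n × Fin n), (q.2 : ℕ) ≤ k → q ∈ D → p.1 = q.1 → p.2 ≤ q.2 →
    ∃ W : (dotGraph D).Walk q p,
      ∀ x ∈ W.support, x ∈ D ∧ x.1 = p.1 ∧ p.2 ≤ x.2 ∧ x.2 ≤ q.2 := by
  intro k
  induction k with
  | zero =>
    intro q hk hq hrow hle
    have : p = q := by
      have h2 : (q.2 : ℕ) = 0 := by omega
      have h3 : (p.2 : ℕ) = 0 := by have := (Fin.le_def.1 hle); omega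
      exact Prod.ext hrow (by rw [Fin.ext_iff]; omega)
    subst this
    refine ⟨Walk.nil, ?_⟩
    intro x hx
    simp only [Walk.support_nil, List.mem_singleton] at hx
    subst hx
    exact ⟨hp, rfl, le_refl _, le_refl _⟩
  | succ k ih =>
    intro q hk hq hrow hle
    by_cases hpq : p = q
    · subst hpq
      refine ⟨Walk.nil, ?_⟩
      intro x hx
      simp only [Walk.support_nil, List.mem_singleton] at hx
      subst hx
      exact ⟨hp, rfl, le_refl _, le_refl _⟩
    · have hlt : p.2 < q.2 := by
        rcases lt_or_eq_of_le hle with h | h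
        · exact h
        · exact absurd (Prod.ext hrow (by rw [h])) hpq
      obtain ⟨q', hq'D, hq'row, hq'lt, hq'ge, hadj⟩ := nearest_left hq hp hrow hlt
      obtain ⟨W', hW'⟩ := ih q' (by have h1 := Fin.lt_def.1 hq'lt; omega) hq'D
        (hrow.trans hq'row.symm) hq'ge
      refine ⟨Walk.cons hadj W', ?_⟩
      intro x hx
      rw [Walk.support_cons, List.mem_cons] at hx
      rcases hx with rfl | hx
      · exact ⟨hq, hrow.symm, le_of_lt hlt, le_refl _⟩
      · obtain ⟨h1, h2, h3, h4⟩ := hW' x hx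
        exact ⟨h1, h2, h3, le_trans h4 (le_of_lt hq'lt)⟩

lemma colWalkD {q : Fin n × Fin n} (hq : q ∈ D) :
    ∀ k (p : Fin n × Fin n), (q.1 : ℕ) - (p.1 : ℕ) ≤ k → p ∈ D → p.2 = q.2 → p.1 ≤ q.1 →
    ∃ W : (dotGraph D).Walk p q,
      ∀ x ∈ W.support, x ∈ D ∧ x.2 = q.2 ∧ p.1 ≤ x.1 ∧ x.1 ≤ q.1 := by
  intro k
  induction k with
  | zero =>
    intro p hk hp hcol hle
    have : p = q := by
      have := Fin.le_def.1 hle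
      exact Prod.ext (by rw [Fin.ext_iff]; omega) hcol
    subst this
    refine ⟨Walk.nil, ?_⟩
    intro x hx
    simp only [Walk.support_nil, List.mem_singleton] at hx
    subst hx
    exact ⟨hp, hcol, le_refl _, le_refl _⟩
  | succ k ih =>
    intro p hk hp hcol hle
    by_cases hpq : p = q
    · subst hpq
      refine ⟨Walk.nil, ?_⟩
      intro x hx
      simp only [Walk.support_nil, List.mem_singleton] at hx
      subst hx
      exact ⟨hp, hcol, le_refl _, le_refl _⟩
    · have hlt : p.1 < q.1 := by
        rcases lt_or_eq_of_le hle with h | h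
        · exact h
        · exact absurd (Prod.ext h hcol) hpq
      obtain ⟨p', hp'D, hp'col, hp'lt, hp'le, hadj⟩ := nearest_below hp hq hcol.symm hlt
      obtain ⟨W', hW'⟩ := ih p' (by have h1 := Fin.lt_def.1 hp'lt; have := Fin.le_def.1 hp'le; omega)
        hp'D (hp'col.trans hcol) hp'le
      refine ⟨Walk.cons hadj W', ?_⟩
      intro x hx
      rw [Walk.support_cons, List.mem_cons] at hx
      rcases hx with rfl | hx
      · exact ⟨hp, hcol, le_refl _, le_of_lt hlt⟩
      · obtain ⟨h1, h2, h3, h4⟩ := hW' x hx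
        exact ⟨h1, h2, le_trans (le_of_lt hp'lt) h3, h4⟩


-- appended to part2
variable (D) in
def homVal : (SimpleGraph.induce (↑D : Set (Fin n × Fin n)) (dotGraph D)) →g dotGraph D :=
  ⟨Subtype.val, fun {a b} h => h⟩

lemma liftW {x y : Fin n × Fin n} (W : (dotGraph D).Walk x y) (hx : x ∈ D) (hy : y ∈ D) :
    ∃ W' : (SimpleGraph.induce (↑D : Set (Fin n × Fin n)) (dotGraph D)).Walk ⟨x, hx⟩ ⟨y, hy⟩,
      W'.map (homVal D) = W := by
  induction W with
  | nil => exact ⟨Walk.nil, rfl⟩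
  | @cons a z b h p ih =>
    have hz : z ∈ D := (dot_adj_mem h).2
    obtain ⟨W', hW'⟩ := ih hz hy
    exact ⟨Walk.cons (by exact h) W', by subst hW'; rfl⟩

lemma full_path_unique (hD : IsCMNAB π D) {x y : Fin n × Fin n} (hx : x ∈ D) (hy : y ∈ D)
    (P Q : (dotGraph D).Walk x y) (hP : P.IsPath) (hQ : Q.IsPath) : P = Q := by
  obtain ⟨P', hP'⟩ := liftW P hx hy
  obtain ⟨Q', hQ'⟩ := liftW Q hx hy
  have hP'p : P'.IsPath := Walk.IsPath.of_map (f := homVal D) (hP' ▸ hP)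
  have hQ'p : Q'.IsPath := Walk.IsPath.of_map (f := homVal D) (hQ' ▸ hQ)
  have := isAcyclic_iff_path_unique.1 hD.2.2.2.IsAcyclic ⟨P', hP'p⟩ ⟨Q', hQ'p⟩
  have hPQ : P' = Q' := congrArg Subtype.val this
  rw [← hP', ← hQ', hPQ]

lemma dot_reachable (hD : IsCMNAB π D) {x y : Fin n × Fin n} (hx : x ∈ D) (hy : y ∈ D) :
    (dotGraph D).Reachable x y := by
  have := hD.2.2.2.isConnected.preconnected ⟨x, hx⟩ ⟨y, hy⟩
  exact this.map (homVal D)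

lemma no_rect (hD : IsCMNAB π D) {c1 c2 d1 d2 : Fin n} (hc : c1 < c2) (hd : d1 < d2)
    (h11 : (c1, d1) ∈ D) (h12 : (c1, d2) ∈ D) (h21 : (c2, d1) ∈ D) (h22 : (c2, d2) ∈ D) :
    False := by
  obtain ⟨W1, hW1⟩ := rowWalkL (p := (c1, d1)) h11 ((c1, d2).2 : ℕ) (c1, d2) (le_refl _)
    h12 rfl (le_of_lt hd)
  obtain ⟨W2, hW2⟩ := colWalkD (q := (c2, d2)) h22 ((c2, d2).1 : ℕ) (c1, d2) (by omega)
    h12 rfl (le_of_lt hc)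
  obtain ⟨W3, hW3⟩ := colWalkD (q := (c2, d1)) h21 ((c2, d1).1 : ℕ) (c1, d1) (by omega)
    h11 rfl (le_of_lt hc)
  obtain ⟨W4, hW4⟩ := rowWalkL (p := (c2, d1)) h21 ((c2, d2).2 : ℕ) (c2, d2) (le_refl _)
    h22 rfl (le_of_lt hd)
  set A : (dotGraph D).Walk (c1, d1) (c2, d2) := W1.reverse.append W2 with hA
  set B : (dotGraph D).Walk (c1, d1) (c2, d2) := W3.append W4.reverse with hB
  have hAsup : ∀ x ∈ A.support, x.1 = c1 ∨ x.2 = d2 := by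
    intro x hx
    rw [hA, Walk.support_append] at hx
    rcases List.mem_append.1 hx with hx | hx
    · rw [Walk.support_reverse] at hx
      exact Or.inl (hW1 x (List.mem_reverse.1 hx)).2.1
    · exact Or.inr (hW2 x (List.mem_of_mem_tail hx)).2.1
  have hBsup : ∀ x ∈ B.support, x.2 = d1 ∨ x.1 = c2 := by
    intro x hx
    rw [hB, Walk.support_append] at hx
    rcases List.mem_append.1 hx with hx | hx
    · exact Or.inl (hW3 x hx).2.1
    · rw [Walk.support_reverse] at hx
      exact Or.inr (hW4 x (List.mem_reverse.1 (List.mem_of_mem_tail hx))).2.1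
  have hne : ((c1, d1) : Fin n × Fin n) ≠ (c2, d2) := by
    intro h
    exact absurd (congrArg Prod.fst h) (ne_of_lt hc)
  set A' := A.toPath with hA'
  set B' := B.toPath with hB'
  have hAB : A'.val = B'.val :=
    full_path_unique hD h11 h22 _ _ A'.isPath B'.isPath
  -- extract second vertex of A'
  obtain ⟨z, hadj, p', hp'⟩ := Walk.exists_eq_cons_of_ne hne A'.val
  have hzA : z ∈ A'.val.support := by
    rw [hp', Walk.support_cons]
    exact List.mem_cons_of_mem _ (Walk.start_mem_support _)
  have hzB : z ∈ B'.val.support := hAB ▸ hzA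
  have hzA' : z.1 = c1 ∨ z.2 = d2 := hAsup z (Walk.support_toPath_subset A hzA)
  have hzB' : z.2 = d1 ∨ z.1 = c2 := hBsup z (Walk.support_toPath_subset B hzB)
  have hzne1 : z ≠ (c1, d1) := (dotGraph D).ne_of_adj hadj.symm
  have hzne2 : z ≠ (c2, d2) := by
    rintro rfl
    rcases dot_adj_line hadj with h | h
    · exact absurd (congrArg Prod.fst (rfl : ((c1,d1) : Fin n × Fin n) = (c1,d1)) ▸ h)
        (by simpa using ne_of_lt hc)
    · exact absurd h (by simpa using ne_of_lt hd)
  rcases hzA' with h1 | h1 <;> rcases hzB' with h2 | h2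
  · exact hzne1 (Prod.ext h1 h2)
  · exact absurd (h1.symm.trans h2) (ne_of_lt hc)
  · exact absurd (h1.symm.trans h2) (ne_of_gt hd)
  · exact hzne2 (Prod.ext h2 h1)
-- chains
def mes (p : Fin n × Fin n) : ℕ := (p.1 : ℕ) * n + (p.2 : ℕ)

variable (D) in
noncomputable def par (p : Fin n × Fin n) : Option (Fin n × Fin n) :=
  if h : ((D.filter (fun q => q.2 = p.2 ∧ q.1 < p.1)).Nonempty) then
    some ((D.filter (fun q => q.2 = p.2 ∧ q.1 < p.1)).exists_max_image
      (fun q => (q.1 : ℕ)) h).choose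
  else if h2 : ((D.filter (fun q => q.1 = p.1 ∧ q.2 < p.2)).Nonempty) then
    some ((D.filter (fun q => q.1 = p.1 ∧ q.2 < p.2)).exists_max_image
      (fun q => (q.2 : ℕ)) h2).choose
  else none

lemma par_spec {p q : Fin n × Fin n} (h : par D p = some q) :
    q ∈ D ∧ ((p.2 = q.2 ∧ q.1 < p.1 ∧ ∀ x ∈ D, x.2 = p.2 → q.1 < x.1 → p.1 ≤ x.1)
           ∨ (p.1 = q.1 ∧ q.2 < p.2 ∧ ∀ x ∈ D, x.1 = p.1 → q.2 < x.2 → p.2 ≤ x.2)) := by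
  unfold par at h
  split_ifs at h with h1 h2
  · have spec := ((D.filter (fun q => q.2 = p.2 ∧ q.1 < p.1)).exists_max_image
      (fun q => (q.1 : ℕ)) h1).choose_spec
    rw [Option.some_inj] at h
    rw [← h] at *
    obtain ⟨hmem, hmax⟩ := spec
    rw [Finset.mem_filter] at hmem
    refine ⟨hmem.1, Or.inl ⟨hmem.2.1.symm, hmem.2.2, ?_⟩⟩
    intro x hx hcol hlt
    by_contra hxlt
    push_neg at hxlt
    have hxf : x ∈ D.filter (fun q => q.2 = p.2 ∧ q.1 < p.1) := by
      rw [Finset.mem_filter]; exact ⟨hx, hcol, hxlt⟩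
    have := hmax x hxf
    omega
  · have spec := ((D.filter (fun q => q.1 = p.1 ∧ q.2 < p.2)).exists_max_image
      (fun q => (q.2 : ℕ)) h2).choose_spec
    rw [Option.some_inj] at h
    rw [← h] at *
    obtain ⟨hmem, hmax⟩ := spec
    rw [Finset.mem_filter] at hmem
    refine ⟨hmem.1, Or.inr ⟨hmem.2.1.symm, hmem.2.2, ?_⟩⟩
    intro x hx hrow hlt
    by_contra hxlt
    push_neg at hxlt
    have hxf : x ∈ D.filter (fun q => q.1 = p.1 ∧ q.2 < p.2) := by
      rw [Finset.mem_filter]; exact ⟨hx, hrow, hxlt⟩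
    have := hmax x hxf
    omega

lemma par_eq_none_iff {p : Fin n × Fin n} :
    par D p = none ↔ ¬ DotAbove D p ∧ ¬ DotLeft D p := by
  constructor
  · intro h
    constructor
    · rintro ⟨q, hq, hcol, hlt⟩
      have h1 : (D.filter (fun q => q.2 = p.2 ∧ q.1 < p.1)).Nonempty :=
        ⟨q, by rw [Finset.mem_filter]; exact ⟨hq, hcol, hlt⟩⟩
      unfold par at h
      rw [dif_pos h1] at h
      simp at h
    · rintro ⟨q, hq, hrow, hlt⟩
      by_cases h1 : (D.filter (fun q => q.2 = p.2 ∧ q.1 < p.1)).Nonempty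
      · unfold par at h
        rw [dif_pos h1] at h
        simp at h
      · have h2 : (D.filter (fun q => q.1 = p.1 ∧ q.2 < p.2)).Nonempty :=
          ⟨q, by rw [Finset.mem_filter]; exact ⟨hq, hrow, hlt⟩⟩
        unfold par at h
        rw [dif_neg h1, dif_pos h2] at h
        simp at h
  · intro ⟨h1, h2⟩
    unfold par
    rw [dif_neg, dif_neg]
    · intro ⟨q, hq⟩
      rw [Finset.mem_filter] at hq
      exact h2 ⟨q, hq.1, hq.2.1, hq.2.2⟩
    · intro ⟨q, hq⟩
      rw [Finset.mem_filter] at hq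
      exact h1 ⟨q, hq.1, hq.2.1, hq.2.2⟩

lemma par_lt {p q : Fin n × Fin n} (h : par D p = some q) : mes q < mes p := by
  obtain ⟨-, hor⟩ := par_spec h
  have hn2 : (q.2 : ℕ) < n := q.2.is_lt
  have hn2' : (p.2 : ℕ) < n := p.2.is_lt
  rcases hor with ⟨hcol, hlt, -⟩ | ⟨hrow, hlt, -⟩
  · have h1 : (q.1 : ℕ) + 1 ≤ (p.1 : ℕ) := Fin.lt_def.1 hlt
    have h2 : ((q.1 : ℕ) + 1) * n ≤ (p.1 : ℕ) * n := Nat.mul_le_mul_right n h1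
    have hexp : ((q.1 : ℕ) + 1) * n = (q.1 : ℕ) * n + n := by ring
    unfold mes
    have hc : (q.2 : ℕ) = (p.2 : ℕ) := by rw [hcol]
    omega
  · have h1 : (q.2 : ℕ) < (p.2 : ℕ) := Fin.lt_def.1 hlt
    unfold mes
    have hc : (q.1 : ℕ) * n = (p.1 : ℕ) * n := by rw [hrow]
    omega

lemma par_coord_le {p q : Fin n × Fin n} (h : par D p = some q) :
    q.1 ≤ p.1 ∧ q.2 ≤ p.2 := by
  obtain ⟨-, hor⟩ := par_spec h
  rcases hor with ⟨hcol, hlt, -⟩ | ⟨hrow, hlt, -⟩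
  · exact ⟨le_of_lt hlt, le_of_eq hcol.symm⟩
  · exact ⟨le_of_eq hrow.symm, le_of_lt hlt⟩

lemma par_mem {p q : Fin n × Fin n} (h : par D p = some q) : q ∈ D := (par_spec h).1

lemma par_adj {p q : Fin n × Fin n} (hp : p ∈ D) (h : par D p = some q) :
    (dotGraph D).Adj p q :=
  adj_of_dotRel ⟨hp, (par_spec h).1, (par_spec h).2⟩

variable (D) in
noncomputable def chain (p : Fin n × Fin n) : List (Fin n × Fin n) :=
  match hpar : par D p with
  | none => [p]
  | some q => p :: chain q
termination_by mes p
decreasing_by exact par_lt hpar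

lemma chain_none {p : Fin n × Fin n} (h : par D p = none) : chain D p = [p] := by
  rw [chain, h]

lemma chain_some {p q : Fin n × Fin n} (h : par D p = some q) :
    chain D p = p :: chain D q := by
  rw [chain, h]

lemma chain_head (p : Fin n × Fin n) : p ∈ chain D p := by
  cases h : par D p with
  | none => rw [chain_none h]; simp
  | some q => rw [chain_some h]; simp

lemma chain_coord : ∀ (p : Fin n × Fin n), ∀ x ∈ chain D p,
    x.1 ≤ p.1 ∧ x.2 ≤ p.2 ∧ mes x ≤ mes p := by
  intro p
  generalize hm : mes p = m
  induction m using Nat.strong_induction_on generalizing p with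
  | _ m ih =>
  subst hm
  intro x hx
  cases h : par D p with
  | none =>
    rw [chain_none h, List.mem_singleton] at hx
    subst hx
    exact ⟨le_refl _, le_refl _, le_refl _⟩
  | some q =>
    rw [chain_some h, List.mem_cons] at hx
    rcases hx with rfl | hx
    · exact ⟨le_refl _, le_refl _, le_refl _⟩
    · obtain ⟨h1, h2, h3⟩ := ih (mes q) (par_lt h) q rfl x hx
      obtain ⟨h4, h5⟩ := par_coord_le h
      exact ⟨le_trans h1 h4, le_trans h2 h5, le_trans h3 (le_of_lt (par_lt h))⟩

lemma chain_root : ∀ (p : Fin n × Fin n), p ∈ D → ∃ r ∈ chain D p, IsRootDot D r := by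
  intro p
  generalize hm : mes p = m
  induction m using Nat.strong_induction_on generalizing p with
  | _ m ih =>
  subst hm
  intro hp
  cases h : par D p with
  | none =>
    obtain ⟨h1, h2⟩ := par_eq_none_iff.1 h
    exact ⟨p, chain_head p, hp, h1, h2⟩
  | some q =>
    obtain ⟨r, hr, hroot⟩ := ih (mes q) (par_lt h) q rfl (par_mem h)
    rw [chain_some h]
    exact ⟨r, List.mem_cons_of_mem _ hr, hroot⟩

lemma exists_root (hne : D.Nonempty) : ∃ r, IsRootDot D r := by
  obtain ⟨p, hp⟩ := hne
  obtain ⟨r, -, hr⟩ := chain_root p hp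
  exact ⟨r, hr⟩

lemma chainWalkTo : ∀ (p : Fin n × Fin n), p ∈ D → ∀ w ∈ chain D p,
    ∃ W : (dotGraph D).Walk p w, W.IsPath ∧ ∀ x ∈ W.support, x ∈ chain D p := by
  intro p
  generalize hm : mes p = m
  induction m using Nat.strong_induction_on generalizing p with
  | _ m ih =>
  subst hm
  intro hp w hw
  by_cases hwp : w = p
  · subst hwp
    refine ⟨Walk.nil, Walk.IsPath.nil, ?_⟩
    intro x hx
    simp only [Walk.support_nil, List.mem_singleton] at hx
    subst hx
    exact chain_head _
  · cases h : par D p with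
    | none =>
      rw [chain_none h, List.mem_singleton] at hw
      exact absurd hw hwp
    | some q =>
      rw [chain_some h, List.mem_cons] at hw
      rcases hw with rfl | hw
      · exact absurd rfl hwp
      · obtain ⟨W', hW'p, hW's⟩ := ih (mes q) (par_lt h) q rfl (par_mem h) w hw
        refine ⟨Walk.cons (par_adj hp h) W', ?_, ?_⟩
        · rw [Walk.cons_isPath_iff]
          refine ⟨hW'p, fun hmem => ?_⟩
          have := (chain_coord q p (hW's p hmem)).2.2
          have := par_lt h
          omega
        · intro x hx
          rw [Walk.support_cons, List.mem_cons] at hx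
          rw [chain_some h]
          rcases hx with rfl | hx
          · simp
          · exact List.mem_cons_of_mem _ (hW's x hx)

lemma fuse (huniq : ∀ r r', IsRootDot D r → IsRootDot D r' → r = r') :
    ∀ (p : Fin n × Fin n), p ∈ D → ∀ (q : Fin n × Fin n), q ∈ D →
    ∃ (w : Fin n × Fin n) (W : (dotGraph D).Walk p q), W.IsPath ∧ w ∈ W.support ∧
      w.1 ≤ p.1 ∧ w.2 ≤ q.2 ∧ ∀ x ∈ W.support, x ∈ chain D p ∨ x ∈ chain D q := by
  intro p
  generalize hm : mes p = m
  induction m using Nat.strong_induction_on generalizing p with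
  | _ m ih =>
  subst hm
  intro hp q hq
  by_cases hmem : p ∈ chain D q
  · obtain ⟨W, hWp, hWs⟩ := chainWalkTo q hq p hmem
    refine ⟨p, W.reverse, (Walk.isPath_reverse_iff W).2 hWp, ?_, le_refl _,
      (chain_coord q p hmem).2.1, ?_⟩
    · rw [Walk.support_reverse, List.mem_reverse]
      exact Walk.end_mem_support W
    · intro x hx
      rw [Walk.support_reverse, List.mem_reverse] at hx
      exact Or.inr (hWs x hx)
  · have hpar : ∃ p', par D p = some p' := by
      cases hpp : par D p with
      | none =>
        obtain ⟨h1, h2⟩ := par_eq_none_iff.1 hpp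
        have hproot : IsRootDot D p := ⟨hp, h1, h2⟩
        obtain ⟨r, hrchain, hrroot⟩ := chain_root q hq
        exact absurd (huniq p r hproot hrroot ▸ hrchain) hmem
      | some p' => exact ⟨p', rfl⟩
    obtain ⟨p', hp'⟩ := hpar
    obtain ⟨w, W', hW'p, hwsup, hw1, hw2, hW'sup⟩ :=
      ih (mes p') (par_lt hp') p' rfl (par_mem hp') q hq
    refine ⟨w, Walk.cons (par_adj hp hp') W', ?_, ?_, ?_, hw2, ?_⟩
    · rw [Walk.cons_isPath_iff]
      refine ⟨hW'p, fun hmemsup => ?_⟩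
      rcases hW'sup p hmemsup with hc | hc
      · have := (chain_coord p' p hc).2.2
        have := par_lt hp'
        omega
      · exact hmem hc
    · rw [Walk.support_cons]
      exact List.mem_cons_of_mem _ hwsup
    · exact le_trans hw1 (par_coord_le hp').1
    · intro x hx
      rw [Walk.support_cons, List.mem_cons] at hx
      rcases hx with rfl | hx
      · exact Or.inl (chain_head x)
      · rcases hW'sup x hx with hc | hc
        · rw [chain_some hp']
          exact Or.inl (List.mem_cons_of_mem _ hc)
        · exact Or.inr hc
-- rootOf
variable (D) in
noncomputable def rootOf (p : Fin n × Fin n) : Fin n × Fin n :=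
  match hpar : par D p with
  | none => p
  | some q => rootOf q
termination_by mes p
decreasing_by exact par_lt hpar

lemma rootOf_none {p : Fin n × Fin n} (h : par D p = none) : rootOf D p = p := by
  rw [rootOf, h]

lemma rootOf_some {p q : Fin n × Fin n} (h : par D p = some q) : rootOf D p = rootOf D q := by
  rw [rootOf, h]

lemma rootOf_of_root {r : Fin n × Fin n} (hr : IsRootDot D r) : rootOf D r = r :=
  rootOf_none (par_eq_none_iff.2 ⟨hr.2.1, hr.2.2⟩)

lemma rootOf_root : ∀ (p : Fin n × Fin n), p ∈ D → IsRootDot D (rootOf D p) := by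
  intro p
  generalize hm : mes p = m
  induction m using Nat.strong_induction_on generalizing p with
  | _ m ih =>
  subst hm
  intro hp
  cases h : par D p with
  | none =>
    rw [rootOf_none h]
    obtain ⟨h1, h2⟩ := par_eq_none_iff.1 h
    exact ⟨hp, h1, h2⟩
  | some q =>
    rw [rootOf_some h]
    exact ih (mes q) (par_lt h) q rfl (par_mem h)

lemma dotRel_par (hnoamb : ∀ p ∈ D, ¬ (DotAbove D p ∧ DotLeft D p))
    {p q : Fin n × Fin n} (h : dotRel D p q) : par D p = some q := by
  obtain ⟨hp, hq, hor⟩ := h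
  rcases hor with ⟨hcol, hlt, hmax⟩ | ⟨hrow, hlt, hmax⟩
  · have h1 : (D.filter (fun x => x.2 = p.2 ∧ x.1 < p.1)).Nonempty :=
      ⟨q, by rw [Finset.mem_filter]; exact ⟨hq, hcol.symm, hlt⟩⟩
    have hps : ∃ q', par D p = some q' := by
      unfold par
      rw [dif_pos h1]
      exact ⟨_, rfl⟩
    obtain ⟨q', hq'⟩ := hps
    obtain ⟨hq'D, hor'⟩ := par_spec hq'
    rcases hor' with ⟨hcol', hlt', hmax'⟩ | ⟨hrow', hlt', -⟩
    · have e1 : q.1 ≤ q'.1 := by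
        by_contra hcon
        push_neg at hcon
        exact absurd (hmax' q hq hcol.symm hcon) (not_le.2 hlt)
      have e2 : q'.1 ≤ q.1 := by
        by_contra hcon
        push_neg at hcon
        exact absurd (hmax q' hq'D hcol'.symm hcon) (not_le.2 hlt')
      have : q = q' := Prod.ext (le_antisymm e1 e2) (hcol.symm.trans hcol')
      rw [hq', this]
    · exact absurd hq' (by
        unfold par
        rw [dif_pos h1]
        intro hcontra
        rw [Option.some_inj] at hcontra
        have spec := ((D.filter (fun x => x.2 = p.2 ∧ x.1 < p.1)).exists_max_image
          (fun x => (x.1 : ℕ)) h1).choose_spec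
        rw [hcontra] at spec
        rw [Finset.mem_filter] at spec
        have := spec.1.2.2
        omega)
  · have hAbove : ¬ DotAbove D p := by
      intro hA
      exact hnoamb p hp ⟨hA, ⟨q, hq, hrow.symm, hlt⟩⟩
    have h1 : ¬ (D.filter (fun x => x.2 = p.2 ∧ x.1 < p.1)).Nonempty := by
      intro ⟨x, hx⟩
      rw [Finset.mem_filter] at hx
      exact hAbove ⟨x, hx.1, hx.2.1, hx.2.2⟩
    have h2 : (D.filter (fun x => x.1 = p.1 ∧ x.2 < p.2)).Nonempty :=
      ⟨q, by rw [Finset.mem_filter]; exact ⟨hq, hrow.symm, hlt⟩⟩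
    have hps : ∃ q', par D p = some q' := by
      unfold par
      rw [dif_neg h1, dif_pos h2]
      exact ⟨_, rfl⟩
    obtain ⟨q', hq'⟩ := hps
    obtain ⟨hq'D, hor'⟩ := par_spec hq'
    rcases hor' with ⟨hcol', hlt', -⟩ | ⟨hrow', hlt', hmax'⟩
    · exact absurd ⟨q', hq'D, hcol'.symm, hlt'⟩ hAbove
    · have e1 : q.2 ≤ q'.2 := by
        by_contra hcon
        push_neg at hcon
        exact absurd (hmax' q hq hrow.symm hcon) (not_le.2 hlt)
      have e2 : q'.2 ≤ q.2 := by
        by_contra hcon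
        push_neg at hcon
        exact absurd (hmax q' hq'D hrow'.symm hcon) (not_le.2 hlt')
      have : q = q' := Prod.ext (hrow.symm.trans hrow') (le_antisymm e1 e2)
      rw [hq', this]

lemma rootOf_adj (hnoamb : ∀ p ∈ D, ¬ (DotAbove D p ∧ DotLeft D p))
    {p q : Fin n × Fin n} (h : (dotGraph D).Adj p q) : rootOf D p = rootOf D q := by
  rw [dotGraph, fromRel_adj] at h
  rcases h.2 with h' | h'
  · exact rootOf_some (dotRel_par hnoamb h')
  · exact (rootOf_some (dotRel_par hnoamb h')).symm

lemma rootOf_reach (hnoamb : ∀ p ∈ D, ¬ (DotAbove D p ∧ DotLeft D p))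
    {p q : Fin n × Fin n} (W : (dotGraph D).Walk p q) : rootOf D p = rootOf D q := by
  induction W with
  | nil => rfl
  | cons h p ih => exact (rootOf_adj hnoamb h).trans ih

lemma exists_amb_of_two_roots (hD : IsCMNAB π D) {r r' : Fin n × Fin n}
    (hr : IsRootDot D r) (hr' : IsRootDot D r') (hne : r ≠ r') :
    ∃ p ∈ D, DotAbove D p ∧ DotLeft D p := by
  by_contra hnoamb
  push_neg at hnoamb
  obtain ⟨W⟩ := dot_reachable hD hr.1 hr'.1
  have : rootOf D r = rootOf D r' := rootOf_reach (fun p hp hc => hnoamb p hp hc.1 hc.2) W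
  rw [rootOf_of_root hr, rootOf_of_root hr'] at this
  exact hne this

-- zeta facts
lemma zeta_adj_of_internal (hD : IsCMNAB π D) {q : Fin n × Fin n} (hq : q ∈ D)
    (hql : q ∉ leafDots π) : (zeta π D).Adj q.1 (π q.2) := by
  rw [zeta, fromRel_adj]
  exact ⟨ne_of_lt (internal_row_lt hD hq hql), Or.inl ⟨q.2, by simpa using hq, hql, rfl⟩⟩

lemma class_reach (hD : IsCMNAB π D) {q : Fin n × Fin n} (hq : q ∈ D) :
    (zeta π D).Reachable q.1 (π q.2) := by
  by_cases hl : q ∈ leafDots π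
  · rw [(mem_leafDots π).1 hl]
  · exact (zeta_adj_of_internal hD hq hl).reachable

lemma zeta_reach_of_dotwalk (hD : IsCMNAB π D) {p q : Fin n × Fin n}
    (W : (dotGraph D).Walk p q) (hp : p ∈ D) : (zeta π D).Reachable p.1 q.1 := by
  induction W with
  | nil => rfl
  | @cons a z b h W' ih =>
    have hz : z ∈ D := (dot_adj_mem h).2
    have ha : a ∈ D := (dot_adj_mem h).1
    refine Reachable.trans ?_ (ih hz)
    rcases dot_adj_line h with hrow | hcol
    · rw [hrow]
    · exact (class_reach hD ha).trans (by rw [hcol]; exact (class_reach hD hz).symm)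

lemma zeta_connected (hD : IsCMNAB π D) : (zeta π D).Connected := by
  obtain ⟨⟨p, hp⟩⟩ := hD.2.2.2.isConnected.nonempty
  haveI : Nonempty (Fin n) := ⟨p.1⟩
  refine Connected.mk ?_
  intro x y
  have hx : (x, π.symm x) ∈ D := hD.1 (leafpt_mem x)
  have hy : (y, π.symm y) ∈ D := hD.1 (leafpt_mem y)
  obtain ⟨W⟩ := dot_reachable hD hx hy
  exact zeta_reach_of_dotwalk hD W hx

lemma leaf_card : (leafDots π).card = n := by
  rw [leafDots, Finset.card_image_of_injective _ (fun a b hab => ?_), Finset.card_univ,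
    Fintype.card_fin]
  exact congrArg Prod.snd hab

lemma zeta_edgeFinset (hD : IsCMNAB π D) :
    (zeta π D).edgeFinset = (D \ leafDots π).image (fun q => s(q.1, π q.2)) := by
  ext e
  induction e using Sym2.ind with
  | _ x y =>
  rw [mem_edgeFinset, mem_edgeSet, zeta, fromRel_adj, Finset.mem_image]
  constructor
  · rintro ⟨hne, ⟨j, hj, hjl, rfl⟩ | ⟨j, hj, hjl, rfl⟩⟩
    · exact ⟨(x, j), by rw [Finset.mem_sdiff]; exact ⟨hj, hjl⟩, rfl⟩
    · exact ⟨(y, j), by rw [Finset.mem_sdiff]; exact ⟨hj, hjl⟩, Sym2.eq_swap⟩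
  · rintro ⟨q, hq, hqe⟩
    rw [Finset.mem_sdiff] at hq
    rw [Sym2.eq_iff] at hqe
    obtain ⟨hqD, hql⟩ := hq
    rcases hqe with ⟨h1, h2⟩ | ⟨h1, h2⟩
    · subst h1
      subst h2
      exact ⟨ne_of_lt (internal_row_lt hD hqD hql),
        Or.inl ⟨q.2, by simpa using hqD, by simpa using hql, rfl⟩⟩
    · subst h1
      subst h2
      exact ⟨ne_of_gt (internal_row_lt hD hqD hql),
        Or.inr ⟨q.2, by simpa using hqD, by simpa using hql, rfl⟩⟩

lemma zeta_card (hD : IsCMNAB π D) : (zeta π D).edgeFinset.card = n - 1 := by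
  rw [zeta_edgeFinset hD]
  rw [Finset.card_image_of_injOn, Finset.card_sdiff_of_subset hD.1, hD.2.1, leaf_card]
  · omega
  · intro q hq q' hq' he
    simp only [Finset.coe_sdiff, Set.mem_diff, Finset.mem_coe] at hq hq'
    rw [Sym2.eq_iff] at he
    rcases he with ⟨h1, h2⟩ | ⟨h1, h2⟩
    · exact Prod.ext h1 (π.injective h2)
    · exfalso
      have l1 := internal_row_lt hD hq.1 hq.2
      have l2 := internal_row_lt hD hq'.1 hq'.2
      rw [h2] at l1
      rw [← h1] at l2
      exact absurd (l1.trans l2) (lt_irrefl _)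

lemma zeta_acyclic (hD : IsCMNAB π D) : (zeta π D).IsAcyclic := by
  obtain ⟨⟨p, hp⟩⟩ := hD.2.2.2.isConnected.nonempty
  have hn : 0 < n := p.1.pos
  refine acyclic_of_card _ (zeta_connected hD) ?_
  rw [ncard_edgeFinset, zeta_card hD, Fintype.card_fin]
  omega

-- helper: ordered decomposition of Sym2 is unique
lemma sym2_ordered {x y c d : Fin n} (h : Sym2.mk x y = Sym2.mk c d)
    (h1 : x < y) (h2 : c < d) : x = c ∧ y = d := by
  rw [Sym2.eq_iff] at h
  rcases h with ⟨rfl, rfl⟩ | ⟨rfl, rfl⟩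
  · exact ⟨rfl, rfl⟩
  · exact absurd (h1.trans h2) (lt_irrefl _)

lemma direction_II (hD : IsCMNAB π D) {m : Fin n × Fin n} (hmD : m ∈ D)
    (hmA : DotAbove D m) (hmL : DotLeft D m) :
    ∃ e, ExtActive (permGraph π) (zeta π D) (revLexEdgeLT π) e := by
  classical
  -- topmost dot of column m.2
  obtain ⟨t, htS, htmin⟩ := (D.filter (fun x => x.2 = m.2)).exists_min_image
    (fun x => (x.1 : ℕ)) ⟨m, by simp [hmD]⟩
  rw [Finset.mem_filter] at htS
  obtain ⟨htD, htcol⟩ := htS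
  -- leftmost dot of row m.1
  obtain ⟨l, hlS, hlmin⟩ := (D.filter (fun x => x.1 = m.1)).exists_min_image
    (fun x => (x.2 : ℕ)) ⟨m, by simp [hmD]⟩
  rw [Finset.mem_filter] at hlS
  obtain ⟨hlD, hlrow⟩ := hlS
  obtain ⟨qa, hqaD, hqacol, hqalt⟩ := hmA
  obtain ⟨ql, hqlD, hqlrow, hqllt⟩ := hmL
  have htlt : t.1 < m.1 := by
    have := htmin qa (by simp [Finset.mem_filter, hqaD, hqacol])
    have := Fin.lt_def.1 hqalt
    rw [Fin.lt_def]
    omega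
  have hllt : l.2 < m.2 := by
    have := hlmin ql (by simp [Finset.mem_filter, hqlD, hqlrow])
    have := Fin.lt_def.1 hqllt
    rw [Fin.lt_def]
    omega
  set a := t.1 with ha
  set j := l.2 with hj
  set b := π j with hb
  -- t and l are internal dots
  have htleaf : t ∉ leafDots π := by
    rw [mem_leafDots]
    intro hleaf
    have h1 := row_le hD hmD
    rw [← htcol] at h1
    rw [← hleaf] at h1
    exact absurd (lt_of_lt_of_le htlt h1) (lt_irrefl _)
  have hlleaf : l ∉ leafDots π := by
    rw [mem_leafDots]
    intro hleaf
    have h1 := col_le hD hmD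
    rw [← hlrow] at h1
    have : l.2 = π.symm l.1 := by rw [hleaf, Equiv.symm_apply_apply]
    rw [← this] at h1
    exact absurd (lt_of_lt_of_le hllt h1) (lt_irrefl _)
  -- basic inequalities
  have hmrow : m.1 ≤ π m.2 := row_le hD hmD
  have hab : a < b := by
    have h1 : l.1 ≤ π l.2 := row_le hD hlD
    rw [hlrow] at h1
    exact lt_of_lt_of_le htlt h1
  have hjsym : π.symm b = j := Equiv.symm_apply_apply π j
  have hjlta : j < π.symm a := by
    have h1 : t.2 < π.symm t.1 := internal_col_lt hD htD htleaf
    rw [htcol] at h1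
    exact hllt.trans h1
  -- (a, j) is not a dot
  have hajD : (a, j) ∉ D := by
    intro hcon
    refine no_rect hD htlt hllt hcon ?_ ?_ ?_
    · rw [← htcol]; exact htD
    · rw [← hlrow]; exact hlD
    · simpa using hmD
  -- e := s(a,b) is an edge of the permutation graph
  have heG : Sym2.mk a b ∈ (permGraph π).edgeSet := by
    rw [mem_edgeSet, permGraph, fromRel_adj]
    exact ⟨ne_of_lt hab, Or.inl ⟨hab, by rw [hjsym]; exact hjlta⟩⟩
  have heT : Sym2.mk a b ∉ (zeta π D).edgeSet := by
    rw [mem_edgeSet, zeta, fromRel_adj]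
    rintro ⟨hne, ⟨jj, hjjD, hjjl, hbe⟩ | ⟨jj, hjjD, hjjl, hae⟩⟩
    · have : jj = j := π.injective (by rw [← hbe])
      rw [this] at hjjD
      exact hajD hjjD
    · have h1 : b < π jj := internal_row_lt hD hjjD hjjl
      rw [← hae] at h1
      exact absurd (hab.trans h1) (lt_irrefl _)
  -- the subgraph of good edges
  set Zs := SimpleGraph.fromRel (fun x y => ∃ jj, (x, jj) ∈ D ∧ (x, jj) ∉ leafDots π ∧
    (a < x ∨ (x = a ∧ j < jj)) ∧ y = π jj) with hZs
  have hsub : Zs ≤ zeta π D := by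
    intro x y hxy
    rw [hZs, fromRel_adj] at hxy
    rw [zeta, fromRel_adj]
    refine ⟨hxy.1, ?_⟩
    rcases hxy.2 with ⟨jj, h1, h2, h3, h4⟩ | ⟨jj, h1, h2, h3, h4⟩
    · exact Or.inl ⟨jj, h1, h2, h4⟩
    · exact Or.inr ⟨jj, h1, h2, h4⟩
  -- reachability from a to b inside Zs
  have hr1 : Zs.Adj a (π m.2) := by
    rw [hZs, fromRel_adj]
    refine ⟨?_, Or.inl ⟨m.2, ?_, ?_, Or.inr ⟨rfl, hllt⟩, rfl⟩⟩
    · exact ne_of_lt (lt_of_lt_of_le htlt hmrow)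
    · rw [show ((a, m.2) : Fin n × Fin n) = t from Prod.ext rfl htcol.symm]
      exact htD
    · rw [show ((a, m.2) : Fin n × Fin n) = t from Prod.ext rfl htcol.symm]
      exact htleaf
  have hr2 : Zs.Reachable (π m.2) m.1 := by
    by_cases hml : m ∈ leafDots π
    · rw [(mem_leafDots π).1 hml]
    · refine (Adj.reachable ?_).symm
      rw [hZs, fromRel_adj]
      refine ⟨ne_of_lt (internal_row_lt hD hmD hml), Or.inl ⟨m.2, by simpa using hmD,
        by simpa using hml, Or.inl htlt, rfl⟩⟩
  have hr3 : Zs.Adj m.1 b := by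
    rw [hZs, fromRel_adj]
    refine ⟨?_, Or.inl ⟨j, ?_, ?_, Or.inl ?_, rfl⟩⟩
    · have h1 : l.1 < π l.2 := internal_row_lt hD hlD hlleaf
      rw [hlrow] at h1
      exact ne_of_lt h1
    · rw [show ((m.1, j) : Fin n × Fin n) = l from Prod.ext hlrow.symm rfl]
      exact hlD
    · rw [show ((m.1, j) : Fin n × Fin n) = l from Prod.ext hlrow.symm rfl]
      exact hlleaf
    · rw [ha] at htlt ⊢
      exact htlt
  have hreach : Zs.Reachable a b := (hr1.reachable.trans hr2).trans hr3.reachable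
  obtain ⟨W⟩ := hreach
  set q0 := W.toPath with hq0
  -- map the good path to a path in zeta
  have hinj : Function.Injective ⇑(Hom.ofLE hsub) := fun _ _ h => h
  set q1 := Walk.map (Hom.ofLE hsub) q0.val with hq1
  have hq1path : q1.IsPath := Walk.map_isPath_of_injective hinj q0.isPath
  have hq1edges : q1.edges = q0.val.edges := by
    rw [hq1, Walk.edges_map]
    have : ∀ e : Sym2 (Fin n), Sym2.map (⇑(Hom.ofLE hsub)) e = e := by
      intro e
      induction e using Sym2.ind with
      | _ x y => rfl
    have h2 : List.map (Sym2.map (⇑(Hom.ofLE hsub))) q0.val.edges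
        = List.map id q0.val.edges := List.map_congr_left (fun e _ => this e)
    rw [h2, List.map_id]
  -- all edges of q0 are good
  have hq0good : ∀ f ∈ q0.val.edges, revLexEdgeLT π f (Sym2.mk a b) := by
    intro f hf
    have hfe := q0.val.edges_subset_edgeSet hf
    clear hf
    revert hfe
    induction f using Sym2.ind with
    | _ x y =>
    intro hfe
    rw [mem_edgeSet, hZs, fromRel_adj] at hfe
    obtain ⟨hne, hor⟩ := hfe
    rcases hor with ⟨jj, h1, h2, h3, rfl⟩ | ⟨jj, h1, h2, h3, rfl⟩
    · refine ⟨x, π jj, a, b, rfl, rfl, internal_row_lt hD h1 h2, hab, ?_⟩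
      rcases h3 with h3 | ⟨h3, h4⟩
      · exact Or.inl h3
      · exact Or.inr ⟨h3.symm, by rw [hjsym, Equiv.symm_apply_apply]; exact h4⟩
    · refine ⟨y, π jj, a, b, Sym2.eq_swap, rfl, internal_row_lt hD h1 h2, hab, ?_⟩
      rcases h3 with h3 | ⟨h3, h4⟩
      · exact Or.inl h3
      · exact Or.inr ⟨h3.symm, by rw [hjsym, Equiv.symm_apply_apply]; exact h4⟩
  -- assemble ExtActive
  refine ⟨Sym2.mk a b, heG, heT, ?_⟩
  intro x y hxy p hp f hf
  rw [Sym2.eq_iff] at hxy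
  rcases hxy with ⟨rfl, rfl⟩ | ⟨rfl, rfl⟩
  · have := isAcyclic_iff_path_unique.1 (zeta_acyclic hD) ⟨p, hp⟩ ⟨q1, hq1path⟩
    have hpq : p = q1 := congrArg Subtype.val this
    rw [hpq, hq1edges] at hf
    exact hq0good f hf
  · have hrev : p.reverse.IsPath := (Walk.isPath_reverse_iff p).2 hp
    have := isAcyclic_iff_path_unique.1 (zeta_acyclic hD) ⟨p.reverse, hrev⟩ ⟨q1, hq1path⟩
    have hpq : p.reverse = q1 := congrArg Subtype.val this
    have hf' : f ∈ p.reverse.edges := by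
      rw [Walk.edges_reverse, List.mem_reverse]
      exact hf
    rw [hpq, hq1edges] at hf'
    exact hq0good f hf'

-- Direction I: transfer a good zeta-path to a dot walk
lemma trans1 (hD : IsCMNAB π D) {a b : Fin n} (hab : a < b) :
    ∀ {x z : Fin n} (W : (zeta π D).Walk x z),
      (∀ f ∈ W.edges, revLexEdgeLT π f (Sym2.mk a b)) →
      (a < z ∨ (z = a ∧ π.symm b < π.symm z)) →
      ∃ Wd : (dotGraph D).Walk (x, π.symm x) (z, π.symm z),
        ∀ r ∈ Wd.support, r ∈ D ∧ (a < r.1 ∨ (r.1 = a ∧ π.symm b < r.2)) := by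
  intro x z W
  induction W with
  | @nil x =>
    intro hE hz
    refine ⟨Walk.nil, ?_⟩
    intro r hr
    simp only [Walk.support_nil, List.mem_singleton] at hr
    subst hr
    refine ⟨hD.1 (leafpt_mem x), ?_⟩
    rcases hz with h | ⟨h, h2⟩
    · exact Or.inl h
    · exact Or.inr ⟨h, h2⟩
  | @cons x z' z h W' ih =>
    intro hE hz
    have hf : Sym2.mk x z' ∈ (Walk.cons h W').edges := by
      rw [Walk.edges_cons]
      exact List.mem_cons_self
    have hgoodf := hE _ hf
    have hE' : ∀ f ∈ W'.edges, revLexEdgeLT π f (Sym2.mk a b) := by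
      intro f hf'
      exact hE f (by rw [Walk.edges_cons]; exact List.mem_cons_of_mem _ hf')
    obtain ⟨Wd', hWd'⟩ := ih hE' hz
    rw [zeta, fromRel_adj] at h
    obtain ⟨hne, hor⟩ := h
    rcases hor with ⟨jj, hjD, hjl, rfl⟩ | ⟨jj, hjD, hjl, rfl⟩
    · -- internal dot (x, jj), z' = π jj
      have hxlt : x < π jj := internal_row_lt hD hjD hjl
      have hgood : a < x ∨ (x = a ∧ π.symm b < jj) := by
        obtain ⟨a', b', c', d', hf1, hf2, hab1, hab2, hcond⟩ := hgoodf
        obtain ⟨rfl, rfl⟩ := sym2_ordered hf1 (by exact hxlt) hab1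
        obtain ⟨rfl, rfl⟩ := sym2_ordered hf2 hab hab2
        rcases hcond with h | ⟨h, h2⟩
        · exact Or.inl h
        · exact Or.inr ⟨h.symm, by rwa [Equiv.symm_apply_apply] at h2⟩
      have hjcol : (x, jj).2 ≤ π.symm (x, jj).1 := col_le hD hjD
      obtain ⟨S1, hS1⟩ := rowWalkL (p := (x, jj)) hjD ((π.symm x : ℕ)) (x, π.symm x)
        (le_refl _) (hD.1 (leafpt_mem x)) rfl hjcol
      obtain ⟨S2, hS2⟩ := colWalkD (q := (π jj, π.symm (π jj))) (hD.1 (leafpt_mem (π jj)))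
        ((π jj : ℕ)) (x, jj) (by simp) hjD (by simp) (le_of_lt hxlt)
      refine ⟨(S1.append S2).append Wd', ?_⟩
      intro r hr
      rw [Walk.support_append, Walk.support_append] at hr
      rcases List.mem_append.1 hr with hr1 | hr2
      · rcases List.mem_append.1 hr1 with hra | hrb
        · obtain ⟨h1, h2, h3, h4⟩ := hS1 r hra
          refine ⟨h1, ?_⟩
          rcases hgood with hg | ⟨hg, hg2⟩
          · exact Or.inl (by rw [h2]; exact hg)
          · exact Or.inr ⟨by rw [h2, hg], lt_of_lt_of_le hg2 h3⟩
        · obtain ⟨h1, h2, h3, h4⟩ := hS2 r (List.mem_of_mem_tail hrb)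
          refine ⟨h1, ?_⟩
          rcases hgood with hg | ⟨hg, hg2⟩
          · exact Or.inl (lt_of_lt_of_le hg h3)
          · rcases lt_or_eq_of_le h3 with hlt | heq
            · exact Or.inl (by rw [hg] at hlt; exact hlt)
            · exact Or.inr ⟨by rw [← heq]; exact hg, by rw [h2]; simpa using hg2⟩
      · exact hWd' r (List.mem_of_mem_tail hr2)
    · -- internal dot (z', jj), x = π jj
      have hzlt : z' < π jj := internal_row_lt hD hjD hjl
      have hgood : a < z' ∨ (z' = a ∧ π.symm b < jj) := by
        obtain ⟨a', b', c', d', hf1, hf2, hab1, hab2, hcond⟩ := hgoodf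
        have hf1' : Sym2.mk z' (π jj) = Sym2.mk a' b' := Sym2.eq_swap.symm.trans hf1
        obtain ⟨rfl, rfl⟩ := sym2_ordered hf1' (by exact hzlt) hab1
        obtain ⟨rfl, rfl⟩ := sym2_ordered hf2 hab hab2
        rcases hcond with h | ⟨h, h2⟩
        · exact Or.inl h
        · exact Or.inr ⟨h.symm, by rwa [Equiv.symm_apply_apply] at h2⟩
      have hjcol : (z', jj).2 ≤ π.symm (z', jj).1 := col_le hD hjD
      obtain ⟨S1, hS1⟩ := rowWalkL (p := (z', jj)) hjD ((π.symm z' : ℕ)) (z', π.symm z')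
        (le_refl _) (hD.1 (leafpt_mem z')) rfl hjcol
      obtain ⟨S2, hS2⟩ := colWalkD (q := (π jj, π.symm (π jj))) (hD.1 (leafpt_mem (π jj)))
        ((π jj : ℕ)) (z', jj) (by simp) hjD (by simp) (le_of_lt hzlt)
      refine ⟨((S1.append S2).reverse).append Wd', ?_⟩
      intro r hr
      rw [Walk.support_append] at hr
      rcases List.mem_append.1 hr with hr1 | hr2
      · rw [Walk.support_reverse, List.mem_reverse, Walk.support_append] at hr1
        rcases List.mem_append.1 hr1 with hra | hrb
        · obtain ⟨h1, h2, h3, h4⟩ := hS1 r hra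
          refine ⟨h1, ?_⟩
          rcases hgood with hg | ⟨hg, hg2⟩
          · exact Or.inl (by rw [h2]; exact hg)
          · exact Or.inr ⟨by rw [h2, hg], lt_of_lt_of_le hg2 h3⟩
        · obtain ⟨h1, h2, h3, h4⟩ := hS2 r (List.mem_of_mem_tail hrb)
          refine ⟨h1, ?_⟩
          rcases hgood with hg | ⟨hg, hg2⟩
          · exact Or.inl (lt_of_lt_of_le hg h3)
          · rcases lt_or_eq_of_le h3 with hlt | heq
            · exact Or.inl (by rw [hg] at hlt; exact hlt)
            · exact Or.inr ⟨by rw [← heq]; exact hg, by rw [h2]; simpa using hg2⟩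
      · exact hWd' r (List.mem_of_mem_tail hr2)

lemma direction_I (hD : IsCMNAB π D)
    (huniq : ∀ r r', IsRootDot D r → IsRootDot D r' → r = r') (e : Sym2 (Fin n)) :
    ¬ ExtActive (permGraph π) (zeta π D) (revLexEdgeLT π) e := by
  induction e using Sym2.ind with
  | _ u v =>
  rintro ⟨heG, heT, hP⟩
  rw [mem_edgeSet, permGraph, fromRel_adj] at heG
  obtain ⟨hne, hor⟩ := heG
  -- normalize to ordered pair (a, b)
  obtain ⟨A, B, hab, hba, hrep⟩ : ∃ A B : Fin n, A < B ∧ π.symm B < π.symm A ∧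
      Sym2.mk u v = Sym2.mk A B := by
    rcases hor with ⟨h1, h2⟩ | ⟨h1, h2⟩
    · exact ⟨u, v, h1, h2, rfl⟩
    · exact ⟨v, u, h1, h2, Sym2.eq_swap⟩
  obtain ⟨W0⟩ := (zeta_connected hD).preconnected A B
  set p0 := W0.toPath with hp0
  have hedges : ∀ f ∈ p0.val.edges, revLexEdgeLT π f (Sym2.mk A B) := by
    intro f hf
    rw [← hrep]
    exact hP A B hrep p0.val p0.isPath f hf
  obtain ⟨Wd, hWd⟩ := trans1 hD hab p0.val hedges (Or.inl hab)
  set Q' := Wd.toPath with hQ'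
  have hLA : ((A, π.symm A) : Fin n × Fin n) ∈ D := hD.1 (leafpt_mem A)
  have hLB : ((B, π.symm B) : Fin n × Fin n) ∈ D := hD.1 (leafpt_mem B)
  obtain ⟨w, Wf, hWfpath, hwsup, hw1, hw2, -⟩ := fuse huniq (A, π.symm A) hLA (B, π.symm B) hLB
  have hequal : Q'.val = Wf := full_path_unique hD hLA hLB Q'.val Wf Q'.isPath hWfpath
  have hwQ : w ∈ Q'.val.support := by rw [hequal]; exact hwsup
  have hwWd : w ∈ Wd.support := Walk.support_toPath_subset Wd hwQ
  obtain ⟨-, hgood⟩ := hWd w hwWd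
  rcases hgood with hg | ⟨hg, hg2⟩
  · exact absurd hg (not_lt.2 hw1)
  · exact absurd hg2 (not_lt.2 hw2)
end CMNABAux

/-- a CMNAB `M` has a unique root if and only if the spanning tree
`ζ(M)` of `G_π` has no externally active edge, for the reverse lexicographic order
on the edges of `G_π` given by the coordinates of the corresponding cells. -/



theorem cmnab_unique_root_iff_no_extActive {n : ℕ} (π : Equiv.Perm (Fin n))
    (D : Finset (Fin n × Fin n)) (hD : IsCMNAB π D) :
    (∃! p, IsRootDot D p) ↔
      ∀ e : Sym2 (Fin n),
        ¬ ExtActive (permGraph π) (zeta π D) (revLexEdgeLT π) e := by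
  constructor
  · rintro ⟨r, hr, hu⟩ e
    exact CMNABAux.direction_I hD (fun r1 r2 h1 h2 => (hu r1 h1).trans (hu r2 h2).symm) e
  · intro hno
    obtain ⟨⟨p0, hp0⟩⟩ := hD.2.2.2.isConnected.nonempty
    obtain ⟨r, hr⟩ := CMNABAux.exists_root ⟨p0, hp0⟩
    refine ⟨r, hr, ?_⟩
    intro r' hr'
    by_contra hne
    obtain ⟨m, hmD, hmA, hmL⟩ := CMNABAux.exists_amb_of_two_roots hD hr' hr hne
    obtain ⟨e, he⟩ := CMNABAux.direction_II hD hmD hmA hmL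
    exact hno e he
end
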